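/- arXiv:1804.10482 — 5 statements merged into one kernel-verified Lean document; each statement's English description precedes it below -/
import Mathlib

section
/- Let H ∈ (1/2,1), T > 0, and let σ : [0,T] → ℝ be continuous. Define ‖σ‖_t² = H(2H−1) ∫_0^t ∫_0^t |u−v|^{2H−2} σ(u) σ(v) du dv and σ̂(t) = H(2H−1) ∫_0^t (t−v)^{2H−2} σ(v) dv. Then for every t ∈ (0,T), the function t ↦ ‖σ‖_t² is differentiable at t with derivative d/dt(‖σ‖_t²) = 2 σ̂(t) σ(t). -/
open MeasureTheory intervalIntegral Set Real

lemma aux_abs_rpow_II {α : ℝ} (hα : -1 < α) (a b : ℝ) :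
    IntervalIntegrable (fun x : ℝ => |x| ^ α) volume a b := by
  have base : ∀ q : ℝ, 0 ≤ q → IntervalIntegrable (fun x : ℝ => |x| ^ α) volume 0 q := by
    intro q hq
    have h := intervalIntegrable_rpow' (a := 0) (b := q) hα
    rw [intervalIntegrable_iff, uIoc_of_le hq] at h ⊢
    refine h.congr_fun (fun x hx => ?_) measurableSet_Ioc
    simp only [abs_of_pos hx.1]
  have all0 : ∀ q : ℝ, IntervalIntegrable (fun x : ℝ => |x| ^ α) volume 0 q := by
    intro q
    rcases le_total 0 q with hq | hq
    · exact base q hq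
    · rw [IntervalIntegrable.iff_comp_neg]
      simp only [abs_neg, neg_zero]
      exact base (-q) (by linarith)
  exact ((all0 a).symm.trans (all0 b))

lemma aux_abs_rpow_II' {α : ℝ} (hα : -1 < α) (c a b : ℝ) :
    IntervalIntegrable (fun v : ℝ => |c - v| ^ α) volume a b := by
  have := (aux_abs_rpow_II hα (c - a) (c - b)).comp_sub_left c
  simpa using this

lemma aux_int_rpow_left {α : ℝ} (hα : -1 < α) (u : ℝ) :
    ∫ v in (0:ℝ)..u, (u - v) ^ α = u ^ (α + 1) / (α + 1) := by
  have h := intervalIntegral.integral_comp_sub_left (a := (0:ℝ)) (b := u)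
    (fun x : ℝ => x ^ α) u
  rw [sub_self, sub_zero] at h
  rw [h, integral_rpow (Or.inl hα), Real.zero_rpow (by linarith), sub_zero]

lemma aux_int_rpow_right {α : ℝ} (hα : -1 < α) (u r : ℝ) :
    ∫ v in u..r, (v - u) ^ α = (r - u) ^ (α + 1) / (α + 1) := by
  have h := intervalIntegral.integral_comp_sub_right (a := u) (b := r)
    (fun x : ℝ => x ^ α) u
  rw [sub_self] at h
  rw [h, integral_rpow (Or.inl hα), Real.zero_rpow (by linarith), sub_zero]

lemma aux_int_abs_rpow {α : ℝ} (hα : -1 < α) {u r : ℝ} (hu : 0 ≤ u) (hur : u ≤ r) :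
    ∫ v in (0:ℝ)..r, |u - v| ^ α = (u ^ (α + 1) + (r - u) ^ (α + 1)) / (α + 1) := by
  have h1 : (∫ v in (0:ℝ)..u, |u - v| ^ α) = u ^ (α + 1) / (α + 1) := by
    rw [← aux_int_rpow_left hα u]
    refine integral_congr fun v hv => ?_
    rw [uIcc_of_le hu] at hv
    rw [abs_of_nonneg (by linarith [hv.2])]
  have h2 : (∫ v in u..r, |u - v| ^ α) = (r - u) ^ (α + 1) / (α + 1) := by
    rw [← aux_int_rpow_right hα u r]
    refine integral_congr fun v hv => ?_
    rw [uIcc_of_le hur] at hv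
    rw [abs_sub_comm, abs_of_nonneg (by linarith [hv.1])]
  rw [← integral_add_adjacent_intervals (aux_abs_rpow_II' hα u 0 u)
    (aux_abs_rpow_II' hα u u r), h1, h2, ← add_div]

lemma aux_k_meas {α : ℝ} {σ : ℝ → ℝ} (hσ : Continuous σ) :
    Measurable (fun p : ℝ × ℝ => |p.1 - p.2| ^ α * σ p.1 * σ p.2) := by
  exact (((measurable_fst.sub measurable_snd).abs.pow measurable_const).mul
    (hσ.measurable.comp measurable_fst)).mul (hσ.measurable.comp measurable_snd)

lemma aux_section_int {α : ℝ} (hα : -1 < α) {σ : ℝ → ℝ} (hσ : Continuous σ)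
    {M : ℝ} (hM : ∀ x, |σ x| ≤ M) {r : ℝ} (hr : 0 ≤ r) (u : ℝ) :
    Integrable (fun v => |u - v| ^ α * σ u * σ v) (volume.restrict (Ioc 0 r)) := by
  have hbase : IntegrableOn (fun v : ℝ => |u - v| ^ α) (Ioc 0 r) volume := by
    have := aux_abs_rpow_II' hα u 0 r
    rwa [intervalIntegrable_iff, uIoc_of_le hr] at this
  have h2 : Integrable (fun v => (σ u * σ v) * |u - v| ^ α) (volume.restrict (Ioc 0 r)) := by
    refine hbase.bdd_mul (c := M * M) ((hσ.measurable.comp measurable_id).aestronglyMeasurable.const_mul _) ?_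
    exact Filter.Eventually.of_forall (fun v => by
      rw [norm_mul, Real.norm_eq_abs, Real.norm_eq_abs]
      exact mul_le_mul (hM u) (hM v) (abs_nonneg _) ((abs_nonneg _).trans (hM u)))
  exact h2.congr (Filter.Eventually.of_forall fun v => by ring)

lemma aux_prod_int {α : ℝ} (hα : -1 < α) {σ : ℝ → ℝ} (hσ : Continuous σ)
    {M : ℝ} (hM : ∀ x, |σ x| ≤ M) {r : ℝ} (hr : 0 ≤ r) :
    Integrable (fun p : ℝ × ℝ => |p.1 - p.2| ^ α * σ p.1 * σ p.2)
      ((volume.restrict (Ioc 0 r)).prod (volume.restrict (Ioc 0 r))) := by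
  have hM0 : 0 ≤ M := (abs_nonneg _).trans (hM 0)
  have meas := (aux_k_meas (α := α) hσ).aestronglyMeasurable
    (μ := (volume.restrict (Ioc 0 r)).prod (volume.restrict (Ioc 0 r)))
  refine (integrable_prod_iff meas).2 ⟨?_, ?_⟩
  · exact Filter.Eventually.of_forall fun u => aux_section_int hα hσ hM hr u
  · set C : ℝ := M * M * ((r ^ (α + 1) + r ^ (α + 1)) / (α + 1)) with hC
    refine Integrable.mono' (g := fun _ => C)
      (integrableOn_const measure_Ioc_lt_top.ne) ?_ ?_
    · exact (meas.norm.integral_prod_right')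
    · rw [ae_restrict_iff' measurableSet_Ioc]
      refine Filter.Eventually.of_forall fun u hu => ?_
      have hnn : 0 ≤ ∫ v, ‖|u - v| ^ α * σ u * σ v‖ ∂(volume.restrict (Ioc 0 r)) :=
        integral_nonneg fun v => norm_nonneg _
      rw [Real.norm_of_nonneg hnn]
      have hle : ∫ v in Ioc 0 r, ‖|u - v| ^ α * σ u * σ v‖ ∂volume
          ≤ ∫ v in Ioc 0 r, M * M * |u - v| ^ α ∂volume := by
        refine setIntegral_mono_on (aux_section_int hα hσ hM hr u).norm
          (by
            have hbase : IntegrableOn (fun v : ℝ => |u - v| ^ α) (Ioc 0 r) volume := by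
              have := aux_abs_rpow_II' hα u 0 r
              rwa [intervalIntegrable_iff, uIoc_of_le hr] at this
            exact hbase.const_mul _) measurableSet_Ioc ?_
        intro v _
        have h0 : (0:ℝ) ≤ |u - v| ^ α := Real.rpow_nonneg (abs_nonneg _) _
        rw [norm_mul, norm_mul, Real.norm_eq_abs, Real.norm_eq_abs, Real.norm_eq_abs,
          abs_of_nonneg h0]
        calc |u - v| ^ α * |σ u| * |σ v| ≤ (|u - v| ^ α * M) * M :=
              mul_le_mul (mul_le_mul_of_nonneg_left (hM u) h0) (hM v) (abs_nonneg _)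
                (mul_nonneg h0 hM0)
          _ = M * M * |u - v| ^ α := by ring
      refine hle.trans ?_
      rw [MeasureTheory.integral_const_mul, ← intervalIntegral.integral_of_le hr,
        aux_int_abs_rpow hα hu.1.le hu.2]
      show M * M * ((u ^ (α + 1) + (r - u) ^ (α + 1)) / (α + 1))
        ≤ M * M * ((r ^ (α + 1) + r ^ (α + 1)) / (α + 1))
      have h1 : u ^ (α + 1) ≤ r ^ (α + 1) := Real.rpow_le_rpow hu.1.le hu.2 (by linarith)
      have h2 : (r - u) ^ (α + 1) ≤ r ^ (α + 1) :=
        Real.rpow_le_rpow (by linarith [hu.1.le, hu.2]) (by linarith [hu.1]) (by linarith)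
      gcongr
      · linarith

lemma aux_symm {α : ℝ} (hα : -1 < α) {σ : ℝ → ℝ} (hσ : Continuous σ)
    {M : ℝ} (hM : ∀ x, |σ x| ≤ M) {r : ℝ} (hr : 0 ≤ r) :
    ∫ u in (0:ℝ)..r, ∫ v in (0:ℝ)..r, |u - v| ^ α * σ u * σ v
      = 2 * ∫ u in (0:ℝ)..r, ∫ v in (0:ℝ)..u, |u - v| ^ α * σ u * σ v := by
  set k : ℝ × ℝ → ℝ := fun p => |p.1 - p.2| ^ α * σ p.1 * σ p.2 with hk_def
  set I : Set ℝ := Ioc (0:ℝ) r with hI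
  set μ2 := (volume.restrict I).prod (volume.restrict I) with hμ2
  have hk : Integrable k μ2 := aux_prod_int hα hσ hM hr
  set A : Set (ℝ × ℝ) := {p | p.2 ≤ p.1} with hA_def
  have hA : MeasurableSet A := measurableSet_le measurable_snd measurable_fst
  have hB : MeasurableSet {p : ℝ × ℝ | p.1 ≤ p.2} :=
    measurableSet_le measurable_fst measurable_snd
  -- diagonal is null
  have hD : MeasurableSet {p : ℝ × ℝ | p.1 = p.2} :=
    measurableSet_eq_fun measurable_fst measurable_snd
  have hD0 : μ2 {p : ℝ × ℝ | p.1 = p.2} = 0 := by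
    rw [hμ2, Measure.prod_apply hD]
    have : ∀ u : ℝ, (volume.restrict I) (Prod.mk u ⁻¹' {p : ℝ × ℝ | p.1 = p.2}) = 0 := by
      intro u
      have : (Prod.mk u ⁻¹' {p : ℝ × ℝ | p.1 = p.2}) = {u} := by
        ext v; simp [eq_comm]
      rw [this]
      exact le_antisymm ((Measure.restrict_apply_le _ _).trans_eq (volume_singleton)) zero_le
    simp [this]
  -- swap invariance
  have hswap : ∫ p, ({p : ℝ × ℝ | p.1 ≤ p.2}.indicator k) p ∂μ2
      = ∫ p, (A.indicator k) p ∂μ2 := by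
    have hmp : MeasurePreserving (Prod.swap : ℝ × ℝ → ℝ × ℝ) μ2 μ2 :=
      Measure.measurePreserving_swap
    have := hmp.integral_comp MeasurableEquiv.prodComm.measurableEmbedding
      ({p : ℝ × ℝ | p.1 ≤ p.2}.indicator k)
    rw [← this]
    refine integral_congr_ae (Filter.Eventually.of_forall fun p => ?_)
    simp only [indicator_apply, Prod.fst_swap, Prod.snd_swap, mem_setOf_eq, hA_def]
    by_cases hp : p.2 ≤ p.1
    · rw [if_pos hp, if_pos hp]
      show k p.swap = k p
      simp only [hk_def, Prod.fst_swap, Prod.snd_swap]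
      rw [abs_sub_comm]; ring
    · rw [if_neg hp, if_neg hp]
  -- complement indicator equals B indicator a.e.
  have hae : (Aᶜ.indicator k) =ᵐ[μ2] ({p : ℝ × ℝ | p.1 ≤ p.2}.indicator k) := by
    have hd : ∀ᵐ p ∂μ2, p ∉ {p : ℝ × ℝ | p.1 = p.2} := by
      rw [ae_iff]; simpa using hD0
    filter_upwards [hd] with p hp
    have hne : p.1 ≠ p.2 := hp
    by_cases h1 : p.2 ≤ p.1
    · rw [indicator_of_notMem (by simpa [hA_def] using h1),
        indicator_of_notMem (by simp; exact lt_of_le_of_ne h1 hne.symm)]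
    · rw [indicator_of_mem (by simpa [hA_def] using h1),
        indicator_of_mem (by simp; exact (not_le.1 h1).le)]
  -- split
  have hsplit : ∫ p, k p ∂μ2 = 2 * ∫ p, (A.indicator k) p ∂μ2 := by
    have h1 : ∫ p, k p ∂μ2 = ∫ p, (A.indicator k) p ∂μ2 + ∫ p, (Aᶜ.indicator k) p ∂μ2 := by
      rw [← integral_add (hk.indicator hA) (hk.indicator hA.compl)]
      refine integral_congr_ae (Filter.Eventually.of_forall fun p => ?_)
      simp [indicator_apply]
      by_cases hp : p ∈ A <;> simp [hp]
    rw [h1, integral_congr_ae hae, hswap]; ring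
  -- iterated forms
  have lhs_eq : ∫ u in (0:ℝ)..r, ∫ v in (0:ℝ)..r, |u - v| ^ α * σ u * σ v
      = ∫ p, k p ∂μ2 := by
    rw [intervalIntegral.integral_of_le hr]
    rw [hμ2, integral_prod k hk]
    refine setIntegral_congr_fun measurableSet_Ioc fun u _ => ?_
    rw [intervalIntegral.integral_of_le hr]
  have rhs_eq : ∫ p, (A.indicator k) p ∂μ2
      = ∫ u in (0:ℝ)..r, ∫ v in (0:ℝ)..u, |u - v| ^ α * σ u * σ v := by
    rw [hμ2, integral_prod _ (hk.indicator hA)]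
    rw [intervalIntegral.integral_of_le hr]
    refine setIntegral_congr_fun measurableSet_Ioc fun u hu => ?_
    have inner : ∀ v : ℝ, (A.indicator k) (u, v) = (Iic u).indicator (fun v => k (u, v)) v := by
      intro v
      by_cases hv : v ≤ u
      · rw [indicator_of_mem (by exact hv : (u,v) ∈ A), indicator_of_mem (by exact hv)]
      · rw [indicator_of_notMem (by exact hv : (u,v) ∉ A), indicator_of_notMem (by exact hv)]
    rw [integral_congr_ae (Filter.Eventually.of_forall inner),
      setIntegral_indicator measurableSet_Iic]
    have : I ∩ Iic u = Ioc 0 u := by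
      rw [hI, Ioc_inter_Iic, min_eq_right hu.2]
    rw [this, intervalIntegral.integral_of_le hu.1.le]
  rw [lhs_eq, hsplit, rhs_eq]

lemma aux_g1_cont {α : ℝ} (hα : -1 < α) {σ : ℝ → ℝ} (hσ : Continuous σ)
    {M : ℝ} (hM : ∀ x, |σ x| ≤ M) :
    Continuous (fun u : ℝ => ∫ w in (0:ℝ)..1, (1 - w) ^ α * σ (u * w)) := by
  refine intervalIntegral.continuous_of_dominated_interval
    (bound := fun w => M * |1 - w| ^ α) ?_ ?_ ?_ ?_
  · intro u
    apply Measurable.aestronglyMeasurable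
    exact (((measurable_const.sub measurable_id).pow measurable_const).mul
      (hσ.measurable.comp (measurable_const.mul measurable_id)))
  · intro u
    refine Filter.Eventually.of_forall fun w hw => ?_
    rw [uIoc_of_le (by norm_num : (0:ℝ) ≤ 1)] at hw
    have h1 : (0:ℝ) ≤ 1 - w := by linarith [hw.2]
    rw [norm_mul, Real.norm_eq_abs, Real.norm_eq_abs,
      abs_of_nonneg (Real.rpow_nonneg h1 _), ← abs_of_nonneg h1]
    rw [mul_comm, abs_abs]
    exact mul_le_mul_of_nonneg_right (hM _) (Real.rpow_nonneg (abs_nonneg _) _)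
  · exact ((aux_abs_rpow_II' hα 1 0 1).const_mul M)
  · refine Filter.Eventually.of_forall fun w _ => ?_
    exact continuous_const.mul (hσ.comp (continuous_id.mul continuous_const))

lemma aux_c_eq {α : ℝ} (hα : -1 < α) {σ : ℝ → ℝ} {u : ℝ} (hu : 0 ≤ u) :
    ∫ v in (0:ℝ)..u, (u - v) ^ α * σ v
      = u ^ (α + 1) * ∫ w in (0:ℝ)..1, (1 - w) ^ α * σ (u * w) := by
  rcases eq_or_lt_of_le hu with rfl | hu0
  · simp [Real.zero_rpow (by linarith : α + 1 ≠ 0)]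
  · have hne : u ≠ 0 := ne_of_gt hu0
    have hsub := intervalIntegral.integral_comp_mul_left
      (a := (0:ℝ)) (b := 1) (fun v => (u - v) ^ α * σ v) hne
    rw [mul_zero, mul_one] at hsub
    have hcongr : ∫ w in (0:ℝ)..1, (u - u * w) ^ α * σ (u * w)
        = u ^ α * ∫ w in (0:ℝ)..1, (1 - w) ^ α * σ (u * w) := by
      rw [← intervalIntegral.integral_const_mul]
      refine integral_congr fun w hw => ?_
      rw [uIcc_of_le (by norm_num : (0:ℝ) ≤ 1)] at hw
      have h1 : (0:ℝ) ≤ 1 - w := by linarith [hw.2]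
      have : u - u * w = u * (1 - w) := by ring
      rw [this, Real.mul_rpow hu h1]
      ring
    rw [hcongr] at hsub
    have key := hsub.symm
    simp only [smul_eq_mul] at key
    rw [Real.rpow_add_one hne]
    have humul : ∫ v in (0:ℝ)..u, (u - v) ^ α * σ v
        = u * (u⁻¹ * ∫ v in (0:ℝ)..u, (u - v) ^ α * σ v) := by field_simp
    rw [humul, key]; ring

theorem aux_main {α : ℝ} (hα : -1 < α) {σ : ℝ → ℝ} (hσ : Continuous σ)
    {M : ℝ} (hM : ∀ x, |σ x| ≤ M) {T t : ℝ} (ht : t ∈ Set.Ioo (0:ℝ) T) :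
    HasDerivAt (fun r : ℝ => ∫ u in (0:ℝ)..r, ∫ v in (0:ℝ)..r, |u - v| ^ α * σ u * σ v)
      (2 * (∫ v in (0:ℝ)..t, (t - v) ^ α * σ v) * σ t) t := by
  obtain ⟨ht0, htT⟩ := ht
  set g1 : ℝ → ℝ := fun u => ∫ w in (0:ℝ)..1, (1 - w) ^ α * σ (u * w) with hg1_def
  have hg1 : Continuous g1 := aux_g1_cont hα hσ hM
  set G : ℝ → ℝ := fun u => σ u * (u ^ (α + 1) * g1 u) with hG_def
  have hG : Continuous G :=
    hσ.mul ((Real.continuous_rpow_const (by linarith)).mul hg1)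
  have hGc : ∀ u : ℝ, 0 ≤ u → G u = σ u * ∫ v in (0:ℝ)..u, (u - v) ^ α * σ v := by
    intro u hu
    rw [hG_def]
    simp only
    rw [aux_c_eq hα hu]
  have hftc : HasDerivAt (fun r : ℝ => ∫ u in (0:ℝ)..r, G u) (G t) t :=
    intervalIntegral.integral_hasDerivAt_right (hG.intervalIntegrable 0 t)
      (hG.stronglyMeasurableAtFilter volume (nhds t)) hG.continuousAt
  have h2 : HasDerivAt (fun r : ℝ => 2 * ∫ u in (0:ℝ)..r, G u) (2 * G t) t :=
    hftc.const_mul 2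
  have hev : (fun r : ℝ => ∫ u in (0:ℝ)..r, ∫ v in (0:ℝ)..r, |u - v| ^ α * σ u * σ v)
      =ᶠ[nhds t] (fun r : ℝ => 2 * ∫ u in (0:ℝ)..r, G u) := by
    refine Filter.eventuallyEq_of_mem (isOpen_Ioo.mem_nhds ⟨ht0, htT⟩) fun r hr => ?_
    have hr0 : (0:ℝ) ≤ r := hr.1.le
    rw [aux_symm hα hσ hM hr0]
    congr 1
    refine integral_congr fun u hu => ?_
    rw [uIcc_of_le hr0] at hu
    have hinner : ∫ v in (0:ℝ)..u, |u - v| ^ α * σ u * σ v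
        = σ u * ∫ v in (0:ℝ)..u, (u - v) ^ α * σ v := by
      rw [← intervalIntegral.integral_const_mul]
      refine integral_congr fun v hv => ?_
      rw [uIcc_of_le hu.1] at hv
      rw [abs_of_nonneg (by linarith [hv.2])]
      ring
    rw [hinner, ← hGc u hu.1]
  have hfinal := HasDerivAt.congr_of_eventuallyEq h2 hev
  have : G t = σ t * ∫ v in (0:ℝ)..t, (t - v) ^ α * σ v := hGc t ht0.le
  rw [this] at hfinal
  exact hfinal.congr_deriv (by ring)

/-- For `H ∈ (1/2,1)` and continuous `σ` on `[0,T]`, the function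
`t ↦ ‖σ‖_t² = H(2H−1) ∫_0^t ∫_0^t |u−v|^{2H−2} σ(u) σ(v) du dv` is differentiable
on `(0,T)` with derivative `2 σ̂(t) σ(t)`, where
`σ̂(t) = H(2H−1) ∫_0^t (t−v)^{2H−2} σ(v) dv`. -/
theorem fbm_normSq_hasDerivAt
    (H T : ℝ) (hH : 1 / 2 < H) (hH1 : H < 1) (hT : 0 < T)
    (σ : ℝ → ℝ) (hσ : ContinuousOn σ (Set.Icc 0 T)) :
    ∀ t ∈ Set.Ioo (0 : ℝ) T,
      HasDerivAt
        (fun r : ℝ => H * (2 * H - 1) *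
          ∫ u in (0 : ℝ)..r, ∫ v in (0 : ℝ)..r, |u - v| ^ (2 * H - 2) * σ u * σ v)
        (2 * (H * (2 * H - 1) * ∫ v in (0 : ℝ)..t, (t - v) ^ (2 * H - 2) * σ v) * σ t)
        t := by
  intro t ht
  have hα : (-1 : ℝ) < 2 * H - 2 := by linarith
  -- extend σ to a continuous bounded function on ℝ
  set σ' : ℝ → ℝ := fun x => σ (max 0 (min x T)) with hσ'_def
  have hproj : ∀ x : ℝ, max 0 (min x T) ∈ Icc (0:ℝ) T := fun x =>
    ⟨le_max_left _ _, max_le hT.le (min_le_right _ _)⟩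
  have hσ'c : Continuous σ' :=
    hσ.comp_continuous (continuous_const.max (continuous_id.min continuous_const)) hproj
  obtain ⟨M, hMb⟩ := (isCompact_Icc (a := (0:ℝ)) (b := T)).exists_bound_of_continuousOn hσ
  have hM : ∀ x, |σ' x| ≤ M := fun x => hMb _ (hproj x)
  have hEq : ∀ x ∈ Icc (0:ℝ) T, σ' x = σ x := by
    intro x hx
    rw [hσ'_def]
    simp only
    rw [min_eq_left hx.2, max_eq_right hx.1]
  have hmain := (aux_main hα hσ'c hM ht).const_mul (H * (2 * H - 1))
  have hev : (fun r : ℝ => H * (2 * H - 1) *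
        ∫ u in (0 : ℝ)..r, ∫ v in (0 : ℝ)..r, |u - v| ^ (2 * H - 2) * σ u * σ v)
      =ᶠ[nhds t] (fun r : ℝ => H * (2 * H - 1) *
        ∫ u in (0 : ℝ)..r, ∫ v in (0 : ℝ)..r, |u - v| ^ (2 * H - 2) * σ' u * σ' v) := by
    refine Filter.eventuallyEq_of_mem (isOpen_Ioo.mem_nhds ht) fun r hr => ?_
    congr 1
    refine integral_congr fun u hu => ?_
    rw [uIcc_of_le hr.1.le] at hu
    have huT : u ∈ Icc (0:ℝ) T := ⟨hu.1, hu.2.trans hr.2.le⟩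
    refine integral_congr fun v hv => ?_
    rw [uIcc_of_le hr.1.le] at hv
    have hvT : v ∈ Icc (0:ℝ) T := ⟨hv.1, hv.2.trans hr.2.le⟩
    rw [hEq u huT, hEq v hvT]
  have hfinal := HasDerivAt.congr_of_eventuallyEq hmain hev
  have hval : ∫ v in (0:ℝ)..t, (t - v) ^ (2 * H - 2) * σ' v
      = ∫ v in (0:ℝ)..t, (t - v) ^ (2 * H - 2) * σ v := by
    refine integral_congr fun v hv => ?_
    rw [uIcc_of_le ht.1.le] at hv
    rw [hEq v ⟨hv.1, hv.2.trans ht.2.le⟩]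
  have hσt : σ' t = σ t := hEq t ⟨ht.1.le, ht.2.le⟩
  rw [hval, hσt] at hfinal
  exact hfinal.congr_deriv (by ring)
end

section
/- Let T > 0, K ≥ 0, L ≥ 0, and let δ : [0,T] → [0,∞) be measurable with s + δ(s) ≤ T + K for all s ∈ [0,T] and such that for every nonnegative integrable function m on [0,T+K] and every t ∈ [0,T] one has ∫_t^T m(s+δ(s)) ds ≤ L ∫_t^{T+K} m(s) ds. Then for every nondecreasing function w : [0,T+K] → [0,∞) and every nonnegative measurable z : [0,T+K] → [0,∞) such that w·z is integrable on [0,T+K], and every t ∈ [0,T], one has ∫_t^T w(s) z(s+δ(s)) ds ≤ L ∫_t^{T+K} w(s) z(s) ds. -/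
open MeasureTheory intervalIntegral Filter

/-- A measurable function bounded between `0` and a constant is interval integrable. -/
lemma aux_bdd_intervalIntegrable (f : ℝ → ℝ) (hf : Measurable f) (a b C : ℝ)
    (h0 : ∀ x, 0 ≤ f x) (hC : ∀ x, f x ≤ C) :
    IntervalIntegrable f MeasureTheory.volume a b := by
  rw [intervalIntegrable_iff]
  refine Integrable.mono'
    ((integrableOn_const measure_Ioc_lt_top.ne) :
      IntegrableOn (fun _ => C) (Set.uIoc a b) MeasureTheory.volume)
    (hf.aestronglyMeasurable).restrict ?_
  · filter_upwards with x
    rw [Real.norm_eq_abs, abs_of_nonneg (h0 x)]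
    exact hC x

/-- Shift lemma with a nondecreasing weight: if the time-advance function `δ` satisfies
`s + δ(s) ≤ T + K` on `[0,T]` and `∫_t^T m(s+δ(s)) ds ≤ L ∫_t^{T+K} m(s) ds` for every
nonnegative integrable `m`, then for every nondecreasing nonnegative weight `w` and every
nonnegative measurable `z` with `w·z` integrable on `[0,T+K]`,
`∫_t^T w(s) z(s+δ(s)) ds ≤ L ∫_t^{T+K} w(s) z(s) ds` for all `t ∈ [0,T]`. -/
theorem shift_ineq_monotone_weight
    (T K L : ℝ) (hT : 0 < T) (hK : 0 ≤ K) (hL : 0 ≤ L)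
    (δ : ℝ → ℝ) (hδmeas : Measurable δ)
    (hδnn : ∀ s ∈ Set.Icc (0 : ℝ) T, 0 ≤ δ s)
    (hδle : ∀ s ∈ Set.Icc (0 : ℝ) T, s + δ s ≤ T + K)
    (hshift : ∀ m : ℝ → ℝ, (∀ s, 0 ≤ m s) → IntegrableOn m (Set.Icc 0 (T + K)) →
        ∀ t ∈ Set.Icc (0 : ℝ) T,
          (∫ s in t..T, m (s + δ s)) ≤ L * ∫ s in t..(T + K), m s)
    (w : ℝ → ℝ) (hw : MonotoneOn w (Set.Icc 0 (T + K)))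
    (hwnn : ∀ s ∈ Set.Icc (0 : ℝ) (T + K), 0 ≤ w s)
    (z : ℝ → ℝ) (hz : Measurable z) (hznn : ∀ s, 0 ≤ z s)
    (hwz : IntegrableOn (fun s => w s * z s) (Set.Icc 0 (T + K))) :
    ∀ t ∈ Set.Icc (0 : ℝ) T,
      (∫ s in t..T, w s * z (s + δ s)) ≤ L * ∫ s in t..(T + K), w s * z s := by
  intro t ht
  obtain ⟨ht0, htT⟩ := ht
  have hTK : (0 : ℝ) ≤ T + K := by linarith
  have htTK : t ≤ T + K := by linarith
  -- clamp function
  set c : ℝ → ℝ := fun s => max 0 (min s (T + K)) with hc_def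
  have hc_mem : ∀ s, c s ∈ Set.Icc (0 : ℝ) (T + K) := by
    intro s
    constructor
    · exact le_max_left _ _
    · exact max_le hTK (min_le_right _ _)
  have hc_id : ∀ s ∈ Set.Icc (0 : ℝ) (T + K), c s = s := by
    intro s hs
    simp only [hc_def]
    rw [min_eq_left hs.2, max_eq_right hs.1]
  have hc_mono : Monotone c := by
    intro a b hab
    exact max_le_max le_rfl (min_le_min hab le_rfl)
  -- extended weight
  set w' : ℝ → ℝ := fun s => w (c s) with hw'_def
  have hw'_mono : Monotone w' := fun a b hab => hw (hc_mem a) (hc_mem b) (hc_mono hab)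
  have hw'_meas : Measurable w' := hw'_mono.measurable
  have hw'_nn : ∀ s, 0 ≤ w' s := fun s => hwnn _ (hc_mem s)
  have hw'_eq : ∀ s ∈ Set.Icc (0 : ℝ) (T + K), w' s = w s := by
    intro s hs; simp only [hw'_def]; rw [hc_id s hs]
  -- the comparison function
  set m : ℝ → ℝ := fun s => w' s * z s with hm_def
  have hm_meas : Measurable m := hw'_meas.mul hz
  have hm_nn : ∀ s, 0 ≤ m s := fun s => mul_nonneg (hw'_nn s) (hznn s)
  have hm_int : IntegrableOn m (Set.Icc 0 (T + K)) := by
    refine hwz.congr_fun (fun s hs => ?_) measurableSet_Icc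
    simp only [hm_def]; rw [hw'_eq s hs]
  -- shifted points stay in [0, T+K]
  have hshift_mem : ∀ s ∈ Set.Icc t T, s + δ s ∈ Set.Icc (0 : ℝ) (T + K) := by
    intro s hs
    have hs' : s ∈ Set.Icc (0 : ℝ) T := ⟨le_trans ht0 hs.1, hs.2⟩
    exact ⟨by have := hδnn s hs'; linarith [hs'.1], hδle s hs'⟩
  -- rewrite both sides using w'
  have hLHS : (∫ s in t..T, w s * z (s + δ s)) = ∫ s in t..T, w' s * z (s + δ s) := by
    refine intervalIntegral.integral_congr (fun s hs => ?_)
    rw [Set.uIcc_of_le htT] at hs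
    have : s ∈ Set.Icc (0 : ℝ) (T + K) := ⟨le_trans ht0 hs.1, le_trans hs.2 (by linarith)⟩
    rw [hw'_eq s this]
  have hRHS : (∫ s in t..(T + K), w s * z s) = ∫ s in t..(T + K), m s := by
    refine intervalIntegral.integral_congr (fun s hs => ?_)
    rw [Set.uIcc_of_le htTK] at hs
    have : s ∈ Set.Icc (0 : ℝ) (T + K) := ⟨le_trans ht0 hs.1, hs.2⟩
    simp only [hm_def]; rw [hw'_eq s this]
  rw [hLHS, hRHS]
  set f : ℝ → ℝ := fun s => w' s * z (s + δ s) with hf_def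
  have hf_meas : Measurable f := hw'_meas.mul (hz.comp (measurable_id.add hδmeas))
  have hf_nn : ∀ s, 0 ≤ f s := fun s => mul_nonneg (hw'_nn s) (hznn _)
  set C : ℝ := L * ∫ s in t..(T + K), m s with hC_def
  have hC_nn : 0 ≤ C := by
    refine mul_nonneg hL (intervalIntegral.integral_nonneg htTK (fun s _ => hm_nn s))
  -- truncated inequality, for each n
  have hkey : ∀ n : ℕ, (∫ s in t..T, min (f s) n) ≤ C := by
    intro n
    have hn0 : (0 : ℝ) ≤ n := Nat.cast_nonneg n
    set mn : ℝ → ℝ := fun s => min (m s) n with hmn_def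
    have hmn_meas : Measurable mn := hm_meas.min measurable_const
    have hmn_nn : ∀ s, 0 ≤ mn s := fun s => le_min (hm_nn s) hn0
    have hmn_le : ∀ s, mn s ≤ n := fun s => min_le_right _ _
    have hmn_int : IntegrableOn mn (Set.Icc 0 (T + K)) := by
      refine Integrable.mono'
        ((integrableOn_const measure_Icc_lt_top.ne) :
          IntegrableOn (fun _ => (n : ℝ)) (Set.Icc 0 (T + K)) MeasureTheory.volume)
        (hmn_meas.aestronglyMeasurable).restrict ?_
      filter_upwards with x
      rw [Real.norm_eq_abs, abs_of_nonneg (hmn_nn x)]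
      exact hmn_le x
    -- step 1: pointwise comparison on [t, T]
    have h1 : (∫ s in t..T, min (f s) n) ≤ ∫ s in t..T, mn (s + δ s) := by
      refine intervalIntegral.integral_mono_on htT
        (aux_bdd_intervalIntegrable _ (hf_meas.min measurable_const) _ _ n
          (fun x => le_min (hf_nn x) hn0) (fun x => min_le_right _ _))
        (aux_bdd_intervalIntegrable _ (hmn_meas.comp (measurable_id.add hδmeas)) _ _ n
          (fun x => hmn_nn _) (fun x => hmn_le _)) ?_
      intro s hs
      have hs' : s ∈ Set.Icc (0 : ℝ) T := ⟨le_trans ht0 hs.1, hs.2⟩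
      have hle : s ≤ s + δ s := le_add_of_nonneg_right (hδnn s hs')
      have hww : w' s ≤ w' (s + δ s) := hw'_mono hle
      have : f s ≤ m (s + δ s) :=
        mul_le_mul_of_nonneg_right hww (hznn _)
      exact min_le_min this le_rfl
    -- step 2: the shift hypothesis
    have h2 : (∫ s in t..T, mn (s + δ s)) ≤ L * ∫ s in t..(T + K), mn s :=
      hshift mn hmn_nn hmn_int t ⟨ht0, htT⟩
    -- step 3: mn ≤ m
    have h3 : (∫ s in t..(T + K), mn s) ≤ ∫ s in t..(T + K), m s := by
      refine intervalIntegral.integral_mono_on htTK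
        (intervalIntegrable_iff.2 (hmn_int.mono_set ?_))
        (intervalIntegrable_iff.2 (hm_int.mono_set ?_))
        (fun s _ => min_le_left _ _)
      · rw [Set.uIoc_of_le htTK]
        exact fun x hx => ⟨le_trans ht0 (le_of_lt hx.1), hx.2⟩
      · rw [Set.uIoc_of_le htTK]
        exact fun x hx => ⟨le_trans ht0 (le_of_lt hx.1), hx.2⟩
    calc (∫ s in t..T, min (f s) n) ≤ ∫ s in t..T, mn (s + δ s) := h1
      _ ≤ L * ∫ s in t..(T + K), mn s := h2
      _ ≤ L * ∫ s in t..(T + K), m s := mul_le_mul_of_nonneg_left h3 hL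
  -- now pass to the limit
  by_cases hint : IntegrableOn f (Set.Ioc t T)
  · -- dominated convergence
    have heq : ∀ n : ℕ, (∫ s in t..T, min (f s) n) = ∫ s in Set.Ioc t T, min (f s) n := by
      intro n; rw [intervalIntegral.integral_of_le htT]
    have heqf : (∫ s in t..T, f s) = ∫ s in Set.Ioc t T, f s :=
      intervalIntegral.integral_of_le htT
    have htend : Tendsto (fun n : ℕ => ∫ s in Set.Ioc t T, min (f s) n) atTop
        (nhds (∫ s in Set.Ioc t T, f s)) := by
      refine MeasureTheory.tendsto_integral_of_dominated_convergence f
        (fun n => ((hf_meas.min measurable_const).aestronglyMeasurable).restrict)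
        hint ?_ ?_
      · intro n
        filter_upwards with x
        rw [Real.norm_eq_abs, abs_of_nonneg (le_min (hf_nn x) (Nat.cast_nonneg n))]
        exact min_le_left _ _
      · filter_upwards with x
        have : ∀ᶠ n : ℕ in atTop, min (f x) n = f x := by
          filter_upwards [eventually_ge_atTop ⌈f x⌉₊] with n hn
          exact min_eq_left (le_trans (Nat.le_ceil _) (Nat.cast_le.2 hn))
        exact Tendsto.congr' (this.mono fun n hn => hn.symm) tendsto_const_nhds
    rw [heqf]
    refine le_of_tendsto htend ?_
    filter_upwards with n
    rw [← heq n]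
    exact hkey n
  · rw [intervalIntegral.integral_of_le htT, MeasureTheory.integral_undef]
    · exact hC_nn
    · exact hint
end

section
/- Let H ∈ (1/2,1), T > 0, K ≥ 0, L ≥ 0, β ≥ 0, and let δ, ζ : [0,T] → [0,∞) be measurable with s + δ(s) ≤ T+K and s + ζ(s) ≤ T+K for all s ∈ [0,T], and such that for every nonnegative integrable m on [0,T+K] and every t ∈ [0,T]: ∫_t^T m(s+δ(s)) ds ≤ L ∫_t^{T+K} m(s) ds and ∫_t^T m(s+ζ(s)) ds ≤ L ∫_t^{T+K} m(s) ds. Let a, b : [0,T+K] → [0,∞) be measurable with ∫_0^{T+K} e^{βs}(a(s) + s^{2H−1} b(s)) ds < ∞. Then for every t ∈ [0,T]: (∫_t^T [e^{βs}(a(s+δ(s)) + b(s+ζ(s)))]^{1/2} ds)² ≤ (2(T−t) + (T^{2−2H} − t^{2−2H})/(1−H)) · L · ∫_t^{T+K} e^{βs}(a(s) + s^{2H−1} b(s)) ds. -/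
open MeasureTheory intervalIntegral Real


lemma sqrt_le_one_add (x : ℝ) (hx : 0 ≤ x) : Real.sqrt x ≤ 1 + x := by
  nlinarith [Real.sq_sqrt hx, Real.sqrt_nonneg x, sq_nonneg (Real.sqrt x - 1)]

lemma sqrt_add_le' (x y : ℝ) (hx : 0 ≤ x) (hy : 0 ≤ y) :
    Real.sqrt (x + y) ≤ Real.sqrt x + Real.sqrt y := by
  have h1 := Real.sq_sqrt hx
  have h2 := Real.sq_sqrt hy
  have h3 := Real.sqrt_nonneg x
  have h4 := Real.sqrt_nonneg y
  have : x + y ≤ (Real.sqrt x + Real.sqrt y) ^ 2 := by nlinarith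
  calc Real.sqrt (x + y) ≤ Real.sqrt ((Real.sqrt x + Real.sqrt y) ^ 2) := Real.sqrt_le_sqrt this
    _ = Real.sqrt x + Real.sqrt y := Real.sqrt_sq (by positivity)

lemma cs_set {s : Set ℝ} {u v : ℝ → ℝ}
    (hu : Measurable u) (hv : Measurable v) (hunn : ∀ x, 0 ≤ u x) (hvnn : ∀ x, 0 ≤ v x)
    (hu2 : IntegrableOn (fun x => u x ^ 2) s) (hv2 : IntegrableOn (fun x => v x ^ 2) s) :
    ∫ x in s, u x * v x ≤ Real.sqrt (∫ x in s, u x ^ 2) * Real.sqrt (∫ x in s, v x ^ 2) := by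
  have hpq : Real.HolderConjugate 2 2 := Real.HolderConjugate.two_two
  have h2 : (ENNReal.ofReal (2:ℝ)) = 2 := by norm_num
  have hmu : MemLp u (ENNReal.ofReal (2:ℝ)) (volume.restrict s) := by
    rw [h2, memLp_two_iff_integrable_sq hu.aestronglyMeasurable]
    exact hu2
  have hmv : MemLp v (ENNReal.ofReal (2:ℝ)) (volume.restrict s) := by
    rw [h2, memLp_two_iff_integrable_sq hv.aestronglyMeasurable]
    exact hv2
  have := integral_mul_le_Lp_mul_Lq_of_nonneg hpq (Filter.Eventually.of_forall hunn)
    (Filter.Eventually.of_forall hvnn) hmu hmv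
  calc ∫ x in s, u x * v x
      ≤ (∫ x in s, u x ^ (2:ℝ)) ^ ((1:ℝ)/2) * (∫ x in s, v x ^ (2:ℝ)) ^ ((1:ℝ)/2) := this
    _ = Real.sqrt (∫ x in s, u x ^ 2) * Real.sqrt (∫ x in s, v x ^ 2) := by
        rw [Real.sqrt_eq_rpow, Real.sqrt_eq_rpow]
        norm_num [Real.rpow_two]

lemma shift_int {T K L t : ℝ} (ht : 0 ≤ t) (htT : t ≤ T) (hTK : T ≤ T + K) (hL : 0 ≤ L)
    {φ : ℝ → ℝ} (hφ : Measurable φ)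
    {m : ℝ → ℝ} (hm : Measurable m) (hmnn : ∀ s, 0 ≤ m s)
    (hmint : IntegrableOn m (Set.Icc 0 (T + K)))
    (hsh : ∀ m' : ℝ → ℝ, (∀ s, 0 ≤ m' s) → IntegrableOn m' (Set.Icc 0 (T + K)) →
      (∫ s in t..T, m' (s + φ s)) ≤ L * ∫ s in t..(T + K), m' s) :
    IntegrableOn (fun s => m (s + φ s)) (Set.Ioc t T) ∧
      (∫ s in Set.Ioc t T, m (s + φ s)) ≤ L * ∫ s in t..(T + K), m s := by
  set f : ℝ → ℝ := fun s => m (s + φ s) with hf_def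
  have hf : Measurable f := hm.comp (measurable_id.add hφ)
  have hfnn : ∀ s, 0 ≤ f s := fun s => hmnn _
  set M : ℝ := ∫ s in t..(T + K), m s with hM_def
  have htTK : t ≤ T + K := htT.trans hTK
  have hM0 : 0 ≤ M := intervalIntegral.integral_nonneg htTK (fun s _ => hmnn s)
  have hmii : IntervalIntegrable m volume t (T + K) := by
    apply IntegrableOn.intervalIntegrable
    apply hmint.mono_set
    rw [Set.uIcc_of_le htTK]
    exact Set.Icc_subset_Icc ht le_rfl
  -- truncation bound
  have key : ∀ n : ℕ, (∫⁻ s in Set.Ioc t T, ENNReal.ofReal (min (f s) n))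
      ≤ ENNReal.ofReal (L * M) := by
    intro n
    set m' : ℝ → ℝ := fun x => min (m x) n with hm'_def
    have hm'nn : ∀ s, 0 ≤ m' s := fun s => le_min (hmnn s) (Nat.cast_nonneg n)
    have hm'meas : Measurable m' := hm.min measurable_const
    have hm'le : ∀ x, m' x ≤ m x := fun x => min_le_left _ _
    have hm'int : IntegrableOn m' (Set.Icc 0 (T + K)) :=
      hmint.mono' hm'meas.aestronglyMeasurable
        (Filter.Eventually.of_forall fun x => by
          rw [Real.norm_of_nonneg (hm'nn x)]; exact hm'le x)
    have h1 := hsh m' hm'nn hm'int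
    have hm'ii : IntervalIntegrable m' volume t (T + K) := by
      apply IntegrableOn.intervalIntegrable
      apply hm'int.mono_set
      rw [Set.uIcc_of_le htTK]
      exact Set.Icc_subset_Icc ht le_rfl
    have h2 : (∫ s in t..(T + K), m' s) ≤ M :=
      intervalIntegral.integral_mono_on htTK hm'ii hmii (fun x _ => hm'le x)
    have h3 : (∫ s in t..T, m' (s + φ s)) ≤ L * M :=
      h1.trans (mul_le_mul_of_nonneg_left h2 hL)
    -- convert LHS to lintegral
    have hgint : IntegrableOn (fun s => min (f s) n) (Set.Ioc t T) := by
      apply Integrable.mono' (integrable_const (n : ℝ))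
        ((hf.min measurable_const).aestronglyMeasurable)
      exact Filter.Eventually.of_forall fun x => by
        rw [Real.norm_of_nonneg (le_min (hfnn x) (Nat.cast_nonneg n))]
        exact min_le_right _ _
    have heq : ENNReal.ofReal (∫ s in Set.Ioc t T, min (f s) n)
        = ∫⁻ s in Set.Ioc t T, ENNReal.ofReal (min (f s) n) :=
      ofReal_integral_eq_lintegral_ofReal hgint
        (Filter.Eventually.of_forall fun x => le_min (hfnn x) (Nat.cast_nonneg n))
    rw [← heq]
    apply ENNReal.ofReal_le_ofReal
    calc (∫ s in Set.Ioc t T, min (f s) n)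
        = ∫ s in t..T, m' (s + φ s) := (intervalIntegral.integral_of_le htT).symm
      _ ≤ L * M := h3
  -- sup step
  have hsup : ∀ s, (⨆ n : ℕ, ENNReal.ofReal (min (f s) n)) = ENNReal.ofReal (f s) := by
    intro s
    apply le_antisymm
    · exact iSup_le fun n => ENNReal.ofReal_le_ofReal (min_le_left _ _)
    · exact le_iSup_of_le ⌈f s⌉₊ (by rw [min_eq_left (Nat.le_ceil _)])
  have htotal : (∫⁻ s in Set.Ioc t T, ENNReal.ofReal (f s)) ≤ ENNReal.ofReal (L * M) := by
    have hmono : Monotone (fun (n : ℕ) (s : ℝ) => ENNReal.ofReal (min (f s) n)) := by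
      intro i j hij s
      exact ENNReal.ofReal_le_ofReal (min_le_min le_rfl (Nat.cast_le.2 hij))
    have : (∫⁻ s in Set.Ioc t T, ENNReal.ofReal (f s))
        = ⨆ n : ℕ, ∫⁻ s in Set.Ioc t T, ENNReal.ofReal (min (f s) n) := by
      rw [← lintegral_iSup (fun n => Measurable.ennreal_ofReal (hf.min measurable_const))
        hmono]
      exact lintegral_congr fun s => (hsup s).symm
    rw [this]
    exact iSup_le key
  have hfint : IntegrableOn f (Set.Ioc t T) := by
    constructor
    · exact hf.aestronglyMeasurable
    · rw [hasFiniteIntegral_iff_ofReal (Filter.Eventually.of_forall hfnn)]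
      exact htotal.trans_lt ENNReal.ofReal_lt_top
  refine ⟨hfint, ?_⟩
  have : (∫ s in Set.Ioc t T, f s) = (∫⁻ s in Set.Ioc t T, ENNReal.ofReal (f s)).toReal := by
    rw [integral_eq_lintegral_of_nonneg_ae (Filter.Eventually.of_forall hfnn)
      hf.aestronglyMeasurable]
  rw [this]
  calc (∫⁻ s in Set.Ioc t T, ENNReal.ofReal (f s)).toReal
      ≤ (ENNReal.ofReal (L * M)).toReal := ENNReal.toReal_mono ENNReal.ofReal_ne_top htotal
    _ = L * M := ENNReal.toReal_ofReal (mul_nonneg hL hM0)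


set_option maxHeartbeats 1000000 in
/-- Deterministic anticipated-term estimate: for `H ∈ (1/2,1)`, advances `δ, ζ`
satisfying the standing shift conditions with constant `L`, and nonnegative `a, b`
with `∫_0^{T+K} e^{βs}(a(s) + s^{2H−1} b(s)) ds < ∞`, for all `t ∈ [0,T]`:
`(∫_t^T [e^{βs}(a(s+δ(s)) + b(s+ζ(s)))]^{1/2} ds)²
  ≤ (2(T−t) + (T^{2−2H} − t^{2−2H})/(1−H)) L ∫_t^{T+K} e^{βs}(a(s) + s^{2H−1} b(s)) ds`. -/
theorem anticipated_term_estimate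
    (H T K L β : ℝ) (hH : 1 / 2 < H) (hH1 : H < 1) (hT : 0 < T) (hK : 0 ≤ K)
    (hL : 0 ≤ L) (hβ : 0 ≤ β)
    (δ ζ : ℝ → ℝ) (hδmeas : Measurable δ) (hζmeas : Measurable ζ)
    (hδnn : ∀ s ∈ Set.Icc (0 : ℝ) T, 0 ≤ δ s)
    (hζnn : ∀ s ∈ Set.Icc (0 : ℝ) T, 0 ≤ ζ s)
    (hδle : ∀ s ∈ Set.Icc (0 : ℝ) T, s + δ s ≤ T + K)
    (hζle : ∀ s ∈ Set.Icc (0 : ℝ) T, s + ζ s ≤ T + K)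
    (hshiftδ : ∀ m : ℝ → ℝ, (∀ s, 0 ≤ m s) → IntegrableOn m (Set.Icc 0 (T + K)) →
        ∀ t ∈ Set.Icc (0 : ℝ) T,
          (∫ s in t..T, m (s + δ s)) ≤ L * ∫ s in t..(T + K), m s)
    (hshiftζ : ∀ m : ℝ → ℝ, (∀ s, 0 ≤ m s) → IntegrableOn m (Set.Icc 0 (T + K)) →
        ∀ t ∈ Set.Icc (0 : ℝ) T,
          (∫ s in t..T, m (s + ζ s)) ≤ L * ∫ s in t..(T + K), m s)
    (a b : ℝ → ℝ) (ha : Measurable a) (hb : Measurable b)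
    (hann : ∀ s, 0 ≤ a s) (hbnn : ∀ s, 0 ≤ b s)
    (hint : IntegrableOn (fun s => Real.exp (β * s) * (a s + s ^ (2 * H - 1) * b s))
      (Set.Icc 0 (T + K))) :
    ∀ t ∈ Set.Icc (0 : ℝ) T,
      (∫ s in t..T, Real.sqrt (Real.exp (β * s) * (a (s + δ s) + b (s + ζ s)))) ^ 2
        ≤ (2 * (T - t) + (T ^ (2 - 2 * H) - t ^ (2 - 2 * H)) / (1 - H)) * L *
            ∫ s in t..(T + K), Real.exp (β * s) * (a s + s ^ (2 * H - 1) * b s) := by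
  -- the two auxiliary weight functions
  set m₁ : ℝ → ℝ := fun s => Real.exp (β * s) * a s with hm₁_def
  set m₂ : ℝ → ℝ := fun s => Real.exp (β * s) * (|s| ^ (2 * H - 1) * b s) with hm₂_def
  have hm₁ : Measurable m₁ := ((measurable_id.const_mul β).exp).mul ha
  have hm₂ : Measurable m₂ := by
    apply ((measurable_id.const_mul β).exp).mul
    exact Measurable.mul (by measurability) hb
  have hm₁nn : ∀ s, 0 ≤ m₁ s := fun s => mul_nonneg (Real.exp_pos _).le (hann s)
  have hm₂nn : ∀ s, 0 ≤ m₂ s := fun s =>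
    mul_nonneg (Real.exp_pos _).le
      (mul_nonneg (Real.rpow_nonneg (abs_nonneg s) _) (hbnn s))
  have hm₁int : IntegrableOn m₁ (Set.Icc 0 (T + K)) := by
    apply hint.mono' hm₁.aestronglyMeasurable
    rw [ae_restrict_iff' measurableSet_Icc]
    refine Filter.Eventually.of_forall fun x hx => ?_
    rw [Real.norm_of_nonneg (hm₁nn x)]
    have : 0 ≤ x ^ (2 * H - 1) * b x :=
      mul_nonneg (Real.rpow_nonneg hx.1 _) (hbnn x)
    have h2 : a x ≤ a x + x ^ (2 * H - 1) * b x := by linarith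
    exact mul_le_mul_of_nonneg_left h2 (Real.exp_pos _).le
  have hm₂int : IntegrableOn m₂ (Set.Icc 0 (T + K)) := by
    apply hint.mono' hm₂.aestronglyMeasurable
    rw [ae_restrict_iff' measurableSet_Icc]
    refine Filter.Eventually.of_forall fun x hx => ?_
    rw [Real.norm_of_nonneg (hm₂nn x)]
    simp only [hm₂_def]
    rw [abs_of_nonneg hx.1]
    have h2 : x ^ (2 * H - 1) * b x ≤ a x + x ^ (2 * H - 1) * b x := by
      linarith [hann x]
    exact mul_le_mul_of_nonneg_left h2 (Real.exp_pos _).le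
  intro t ht
  obtain ⟨ht0, htT⟩ := ht
  have hTK : T ≤ T + K := by linarith
  have htTK : t ≤ T + K := htT.trans hTK
  have hTt : (0:ℝ) ≤ T - t := by linarith
  obtain ⟨hf₁int, hf₁bd⟩ := shift_int ht0 htT hTK hL hδmeas hm₁ hm₁nn hm₁int
    (fun m' h1 h2 => hshiftδ m' h1 h2 t ⟨ht0, htT⟩)
  obtain ⟨hf₂int, hf₂bd⟩ := shift_int ht0 htT hTK hL hζmeas hm₂ hm₂nn hm₂int
    (fun m' h1 h2 => hshiftζ m' h1 h2 t ⟨ht0, htT⟩)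
  set A : ℝ := ∫ s in t..(T + K), m₁ s with hA_def
  set B : ℝ := ∫ s in t..(T + K), m₂ s with hB_def
  have hA0 : 0 ≤ A := intervalIntegral.integral_nonneg htTK (fun s _ => hm₁nn s)
  have hB0 : 0 ≤ B := intervalIntegral.integral_nonneg htTK (fun s _ => hm₂nn s)
  have h₁ii : IntervalIntegrable m₁ volume t (T + K) := by
    apply IntegrableOn.intervalIntegrable
    apply hm₁int.mono_set
    rw [Set.uIcc_of_le htTK]
    exact Set.Icc_subset_Icc ht0 le_rfl
  have h₂ii : IntervalIntegrable m₂ volume t (T + K) := by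
    apply IntegrableOn.intervalIntegrable
    apply hm₂int.mono_set
    rw [Set.uIcc_of_le htTK]
    exact Set.Icc_subset_Icc ht0 le_rfl
  have hRHS : (∫ s in t..(T + K), Real.exp (β * s) * (a s + s ^ (2 * H - 1) * b s))
      = A + B := by
    rw [hA_def, hB_def, ← intervalIntegral.integral_add h₁ii h₂ii]
    apply intervalIntegral.integral_congr
    intro s hs
    rw [Set.uIcc_of_le htTK] at hs
    have hs0 : (0:ℝ) ≤ s := le_trans ht0 hs.1
    simp only [hm₁_def, hm₂_def, abs_of_nonneg hs0]
    ring
  -- the singular weight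
  set u : ℝ → ℝ := fun s => Real.sqrt (|s| ^ (1 - 2 * H)) with hu_def
  have humeas : Measurable u := Real.continuous_sqrt.measurable.comp
    (by measurability)
  have hunn : ∀ s, 0 ≤ u s := fun s => Real.sqrt_nonneg _
  have hu2 : ∀ s, u s ^ 2 = |s| ^ (1 - 2 * H) := fun s =>
    Real.sq_sqrt (Real.rpow_nonneg (abs_nonneg s) _)
  have hu2int : IntegrableOn (fun s => u s ^ 2) (Set.Ioc t T) := by
    have h1 : IntegrableOn (fun s : ℝ => s ^ (1 - 2 * H)) (Set.Ioc t T) := by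
      have := intervalIntegral.intervalIntegrable_rpow' (a := t) (b := T)
        (r := 1 - 2 * H) (by linarith)
      rwa [intervalIntegrable_iff, Set.uIoc_of_le htT] at this
    apply h1.congr_fun _ measurableSet_Ioc
    intro s hs
    simp only
    rw [hu2, abs_of_pos (lt_of_le_of_lt ht0 hs.1)]
  have hu2val : (∫ s in Set.Ioc t T, u s ^ 2)
      = (T ^ (2 - 2 * H) - t ^ (2 - 2 * H)) / (2 - 2 * H) := by
    have h1 : (∫ s in Set.Ioc t T, u s ^ 2) = ∫ s in t..T, s ^ (1 - 2 * H) := by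
      rw [intervalIntegral.integral_of_le htT]
      apply setIntegral_congr_fun measurableSet_Ioc
      intro s hs
      simp only
      rw [hu2, abs_of_pos (lt_of_le_of_lt ht0 hs.1)]
    rw [h1, integral_rpow (Or.inl (by linarith))]
    have h2 : 1 - 2 * H + 1 = 2 - 2 * H := by ring
    rw [h2]
  -- pointwise bound
  have hpt : ∀ s ∈ Set.Ioc t T,
      Real.sqrt (Real.exp (β * s) * (a (s + δ s) + b (s + ζ s)))
        ≤ Real.sqrt (m₁ (s + δ s)) + u s * Real.sqrt (m₂ (s + ζ s)) := by
    intro s hs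
    have hs0 : 0 < s := lt_of_le_of_lt ht0 hs.1
    have hsIcc : s ∈ Set.Icc (0:ℝ) T := ⟨hs0.le, hs.2⟩
    have hδ0 := hδnn s hsIcc
    have hζ0 := hζnn s hsIcc
    have e1 : Real.exp (β * s) * (a (s + δ s) + b (s + ζ s))
        = Real.exp (β * s) * a (s + δ s) + Real.exp (β * s) * b (s + ζ s) := by ring
    have hx1 : (0:ℝ) ≤ Real.exp (β * s) * a (s + δ s) :=
      mul_nonneg (Real.exp_pos _).le (hann _)
    have hx2 : (0:ℝ) ≤ Real.exp (β * s) * b (s + ζ s) :=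
      mul_nonneg (Real.exp_pos _).le (hbnn _)
    have step1 : Real.sqrt (Real.exp (β * s) * (a (s + δ s) + b (s + ζ s)))
        ≤ Real.sqrt (Real.exp (β * s) * a (s + δ s))
          + Real.sqrt (Real.exp (β * s) * b (s + ζ s)) := by
      rw [e1]; exact sqrt_add_le' _ _ hx1 hx2
    have step2 : Real.sqrt (Real.exp (β * s) * a (s + δ s))
        ≤ Real.sqrt (m₁ (s + δ s)) := by
      apply Real.sqrt_le_sqrt
      simp only [hm₁_def]
      exact mul_le_mul_of_nonneg_right
        (Real.exp_le_exp.2 (by nlinarith)) (hann _)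
    have step3 : Real.sqrt (Real.exp (β * s) * b (s + ζ s))
        ≤ u s * Real.sqrt (m₂ (s + ζ s)) := by
      have habs : |s| = s := abs_of_pos hs0
      have h2 : s ^ (2 * H - 1) * (Real.exp (β * s) * b (s + ζ s)) ≤ m₂ (s + ζ s) := by
        simp only [hm₂_def]
        rw [abs_of_pos (by linarith : (0:ℝ) < s + ζ s)]
        have hr : s ^ (2 * H - 1) ≤ (s + ζ s) ^ (2 * H - 1) :=
          Real.rpow_le_rpow hs0.le (by linarith) (by linarith)
        have he : Real.exp (β * s) ≤ Real.exp (β * (s + ζ s)) :=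
          Real.exp_le_exp.2 (by nlinarith)
        have hre : s ^ (2 * H - 1) * Real.exp (β * s)
            ≤ (s + ζ s) ^ (2 * H - 1) * Real.exp (β * (s + ζ s)) :=
          mul_le_mul hr he (Real.exp_pos _).le (Real.rpow_nonneg (by linarith) _)
        nlinarith [mul_le_mul_of_nonneg_right hre (hbnn (s + ζ s))]
      have hmain : Real.exp (β * s) * b (s + ζ s)
          ≤ s ^ (1 - 2 * H) * m₂ (s + ζ s) := by
        have hone : s ^ (1 - 2 * H) * s ^ (2 * H - 1) = 1 := by
          rw [← Real.rpow_add hs0]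
          norm_num
        calc Real.exp (β * s) * b (s + ζ s)
            = s ^ (1 - 2 * H) * (s ^ (2 * H - 1) * (Real.exp (β * s) * b (s + ζ s))) := by
              rw [← mul_assoc, hone, one_mul]
          _ ≤ s ^ (1 - 2 * H) * m₂ (s + ζ s) :=
              mul_le_mul_of_nonneg_left h2 (Real.rpow_nonneg hs0.le _)
      calc Real.sqrt (Real.exp (β * s) * b (s + ζ s))
          ≤ Real.sqrt (s ^ (1 - 2 * H) * m₂ (s + ζ s)) := Real.sqrt_le_sqrt hmain
        _ = Real.sqrt (s ^ (1 - 2 * H)) * Real.sqrt (m₂ (s + ζ s)) :=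
            Real.sqrt_mul (Real.rpow_nonneg hs0.le _) _
        _ = u s * Real.sqrt (m₂ (s + ζ s)) := by rw [hu_def]; simp [habs]
    calc Real.sqrt (Real.exp (β * s) * (a (s + δ s) + b (s + ζ s)))
        ≤ Real.sqrt (Real.exp (β * s) * a (s + δ s))
          + Real.sqrt (Real.exp (β * s) * b (s + ζ s)) := step1
      _ ≤ Real.sqrt (m₁ (s + δ s)) + u s * Real.sqrt (m₂ (s + ζ s)) :=
          add_le_add step2 step3
  -- integrability of the comparison functions
  have hsqf₁meas : Measurable fun s => Real.sqrt (m₁ (s + δ s)) :=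
    Real.continuous_sqrt.measurable.comp (hm₁.comp (measurable_id.add hδmeas))
  have hsqf₂meas : Measurable fun s => Real.sqrt (m₂ (s + ζ s)) :=
    Real.continuous_sqrt.measurable.comp (hm₂.comp (measurable_id.add hζmeas))
  have hs1 : IntegrableOn (fun s => Real.sqrt (m₁ (s + δ s))) (Set.Ioc t T) := by
    apply Integrable.mono' ((integrable_const (1:ℝ)).add hf₁int)
      hsqf₁meas.aestronglyMeasurable
    refine Filter.Eventually.of_forall fun s => ?_
    rw [Real.norm_of_nonneg (Real.sqrt_nonneg _)]
    exact sqrt_le_one_add _ (hm₁nn _)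
  have hs2 : IntegrableOn (fun s => u s * Real.sqrt (m₂ (s + ζ s))) (Set.Ioc t T) := by
    apply Integrable.mono' (hu2int.add hf₂int)
      (humeas.mul hsqf₂meas).aestronglyMeasurable
    refine Filter.Eventually.of_forall fun s => ?_
    show ‖u s * Real.sqrt (m₂ (s + ζ s))‖ ≤ u s ^ 2 + m₂ (s + ζ s)
    rw [Real.norm_of_nonneg (mul_nonneg (hunn s) (Real.sqrt_nonneg _))]
    show u s * Real.sqrt (m₂ (s + ζ s)) ≤ u s ^ 2 + m₂ (s + ζ s)
    nlinarith [sq_nonneg (u s - Real.sqrt (m₂ (s + ζ s))), Real.sq_sqrt (hm₂nn (s + ζ s)),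
      hunn s, Real.sqrt_nonneg (m₂ (s + ζ s))]
  -- integrability of the sqrt integrand
  have hFmeas : Measurable fun s =>
      Real.sqrt (Real.exp (β * s) * (a (s + δ s) + b (s + ζ s))) :=
    Real.continuous_sqrt.measurable.comp
      (((measurable_id.const_mul β).exp).mul
        ((ha.comp (measurable_id.add hδmeas)).add (hb.comp (measurable_id.add hζmeas))))
  have hFint : IntegrableOn
      (fun s => Real.sqrt (Real.exp (β * s) * (a (s + δ s) + b (s + ζ s))))
      (Set.Ioc t T) := by
    apply Integrable.mono' (hs1.add hs2) hFmeas.aestronglyMeasurable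
    rw [ae_restrict_iff' measurableSet_Ioc]
    refine Filter.Eventually.of_forall fun s hs => ?_
    rw [Real.norm_of_nonneg (Real.sqrt_nonneg _)]
    exact hpt s hs
  -- main chain
  set J₁ : ℝ := ∫ s in Set.Ioc t T, m₁ (s + δ s) with hJ₁_def
  set J₂ : ℝ := ∫ s in Set.Ioc t T, m₂ (s + ζ s) with hJ₂_def
  have hJ₁0 : 0 ≤ J₁ := setIntegral_nonneg measurableSet_Ioc (fun s _ => hm₁nn _)
  have hJ₂0 : 0 ≤ J₂ := setIntegral_nonneg measurableSet_Ioc (fun s _ => hm₂nn _)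
  set c₂ : ℝ := (T ^ (2 - 2 * H) - t ^ (2 - 2 * H)) / (2 - 2 * H) with hc₂_def
  have hc₂0 : 0 ≤ c₂ := by
    apply div_nonneg _ (by linarith)
    have := Real.rpow_le_rpow ht0 htT (by linarith : (0:ℝ) ≤ 2 - 2 * H)
    linarith
  -- Cauchy–Schwarz 1
  have hcs1 : (∫ s in Set.Ioc t T, Real.sqrt (m₁ (s + δ s)))
      ≤ Real.sqrt J₁ * Real.sqrt (T - t) := by
    have hsq : (fun s => Real.sqrt (m₁ (s + δ s)) ^ 2) = fun s => m₁ (s + δ s) :=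
      funext fun s => Real.sq_sqrt (hm₁nn _)
    have h1 := cs_set (s := Set.Ioc t T) hsqf₁meas measurable_const
      (fun s => Real.sqrt_nonneg _) (fun _ => zero_le_one)
      (by rw [hsq]; exact hf₁int)
      (by simpa using (integrableOn_const (C := (1:ℝ)) (s := Set.Ioc t T) (μ := volume) measure_Ioc_lt_top.ne))
    simp only [mul_one, one_pow] at h1
    have h2 : (∫ (_ : ℝ) in Set.Ioc t T, (1:ℝ)) = T - t := by
      rw [setIntegral_const, Real.volume_real_Ioc_of_le htT, smul_eq_mul, mul_one]
    rw [hsq, h2] at h1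
    exact h1
  -- Cauchy–Schwarz 2
  have hcs2 : (∫ s in Set.Ioc t T, u s * Real.sqrt (m₂ (s + ζ s)))
      ≤ Real.sqrt c₂ * Real.sqrt J₂ := by
    have hsq : (fun s => Real.sqrt (m₂ (s + ζ s)) ^ 2) = fun s => m₂ (s + ζ s) :=
      funext fun s => Real.sq_sqrt (hm₂nn _)
    have h1 := cs_set (s := Set.Ioc t T) humeas hsqf₂meas
      (hunn) (fun s => Real.sqrt_nonneg _)
      hu2int (by rw [hsq]; exact hf₂int)
    rw [hsq, hu2val] at h1
    exact h1
  have hImono : (∫ s in Set.Ioc t T,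
      Real.sqrt (Real.exp (β * s) * (a (s + δ s) + b (s + ζ s))))
      ≤ Real.sqrt J₁ * Real.sqrt (T - t) + Real.sqrt c₂ * Real.sqrt J₂ := by
    calc (∫ s in Set.Ioc t T, Real.sqrt (Real.exp (β * s) * (a (s + δ s) + b (s + ζ s))))
        ≤ ∫ s in Set.Ioc t T,
            (Real.sqrt (m₁ (s + δ s)) + u s * Real.sqrt (m₂ (s + ζ s))) :=
          setIntegral_mono_on hFint (hs1.add hs2) measurableSet_Ioc hpt
      _ = (∫ s in Set.Ioc t T, Real.sqrt (m₁ (s + δ s)))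
            + ∫ s in Set.Ioc t T, u s * Real.sqrt (m₂ (s + ζ s)) :=
          integral_add hs1 hs2
      _ ≤ Real.sqrt J₁ * Real.sqrt (T - t) + Real.sqrt c₂ * Real.sqrt J₂ :=
          add_le_add hcs1 hcs2
  have hI0 : 0 ≤ ∫ s in Set.Ioc t T,
      Real.sqrt (Real.exp (β * s) * (a (s + δ s) + b (s + ζ s))) :=
    setIntegral_nonneg measurableSet_Ioc (fun s _ => Real.sqrt_nonneg _)
  rw [intervalIntegral.integral_of_le htT, hRHS]
  set I : ℝ := ∫ s in Set.Ioc t T,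
    Real.sqrt (Real.exp (β * s) * (a (s + δ s) + b (s + ζ s)))
  have h1 : I ^ 2 ≤ (Real.sqrt J₁ * Real.sqrt (T - t) + Real.sqrt c₂ * Real.sqrt J₂) ^ 2 :=
    pow_le_pow_left₀ hI0 hImono 2
  have h2 : (Real.sqrt J₁ * Real.sqrt (T - t) + Real.sqrt c₂ * Real.sqrt J₂) ^ 2
      ≤ 2 * (J₁ * (T - t)) + 2 * (c₂ * J₂) := by
    nlinarith [sq_nonneg (Real.sqrt J₁ * Real.sqrt (T - t) - Real.sqrt c₂ * Real.sqrt J₂),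
      Real.sq_sqrt hJ₁0, Real.sq_sqrt hJ₂0, Real.sq_sqrt hc₂0, Real.sq_sqrt hTt,
      Real.sqrt_nonneg J₁, Real.sqrt_nonneg J₂, Real.sqrt_nonneg c₂, Real.sqrt_nonneg (T - t)]
  have h3 : 2 * (J₁ * (T - t)) + 2 * (c₂ * J₂)
      ≤ (2 * (T - t) + 2 * c₂) * (L * (A + B)) := by
    have b1 : J₁ ≤ L * A := hf₁bd
    have b2 : J₂ ≤ L * B := hf₂bd
    nlinarith [mul_le_mul_of_nonneg_left b1 hTt, mul_le_mul_of_nonneg_left b2 hc₂0,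
      mul_nonneg hTt (mul_nonneg hL hB0), mul_nonneg hc₂0 (mul_nonneg hL hA0)]
  have h2c : (T ^ (2 - 2 * H) - t ^ (2 - 2 * H)) / (1 - H) = 2 * c₂ := by
    rw [hc₂_def, show (2:ℝ) - 2 * H = 2 * (1 - H) from by ring, ← mul_div_assoc,
      mul_div_mul_left _ _ (two_ne_zero)]
  rw [h2c]
  calc I ^ 2 ≤ (2 * (T - t) + 2 * c₂) * (L * (A + B)) := le_trans h1 (le_trans h2 h3)
    _ = (2 * (T - t) + 2 * c₂) * L * (A + B) := by ring
end

section
/- Let T > 0, C ≥ 0, let x : [0,T] → [0,∞) be continuous and let g : [0,T] → [0,∞) be integrable. If x(t)² ≤ 4C ∫_t^T x(s) g(s) ds for all t ∈ [0,T], then x(t) ≤ 2C ∫_t^T g(s) ds for all t ∈ [0,T]. -/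
open MeasureTheory intervalIntegral

lemma bsg_fubini (t T : ℝ) (g : ℝ → ℝ) (hg : IntegrableOn g (Set.Ioc t T)) :
    2 * ∫ s in Set.Ioc t T, g s * ∫ r in Set.Ioc s T, g r
      = (∫ s in Set.Ioc t T, g s) ^ 2 := by
  set μ := volume.restrict (Set.Ioc t T) with hμ
  have hgi : Integrable g μ := hg
  have hF : Integrable (fun p : ℝ × ℝ => g p.1 * g p.2) (μ.prod μ) := hgi.mul_prod hgi
  have hs₁ : MeasurableSet {p : ℝ × ℝ | p.1 < p.2} :=
    measurableSet_lt measurable_fst measurable_snd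
  have hs₂ : MeasurableSet {p : ℝ × ℝ | p.2 ≤ p.1} :=
    measurableSet_le measurable_snd measurable_fst
  have hf₁ : Integrable (fun p : ℝ × ℝ => if p.1 < p.2 then g p.1 * g p.2 else 0)
      (μ.prod μ) := by
    have : (fun p : ℝ × ℝ => if p.1 < p.2 then g p.1 * g p.2 else 0)
        = {p : ℝ × ℝ | p.1 < p.2}.indicator (fun p => g p.1 * g p.2) := by
      funext p; simp [Set.indicator_apply]
    rw [this]; exact hF.indicator hs₁
  have hf₂ : Integrable (fun p : ℝ × ℝ => if p.2 ≤ p.1 then g p.1 * g p.2 else 0)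
      (μ.prod μ) := by
    have : (fun p : ℝ × ℝ => if p.2 ≤ p.1 then g p.1 * g p.2 else 0)
        = {p : ℝ × ℝ | p.2 ≤ p.1}.indicator (fun p => g p.1 * g p.2) := by
      funext p; simp [Set.indicator_apply]
    rw [this]; exact hF.indicator hs₂
  -- I = I₁
  have hI₁ : (∫ s in Set.Ioc t T, g s * ∫ r in Set.Ioc s T, g r)
      = ∫ s, (∫ r, (if s < r then g s * g r else 0) ∂μ) ∂μ := by
    rw [hμ]
    refine setIntegral_congr_fun measurableSet_Ioc (fun s hs => ?_)
    have h1 : (fun r => if s < r then g s * g r else 0)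
        = (Set.Ioi s).indicator (fun r => g s * g r) := by
      funext r; simp [Set.indicator_apply, Set.mem_Ioi]
    rw [h1, setIntegral_indicator measurableSet_Ioi, Set.Ioc_inter_Ioi,
      max_eq_right hs.1.le, MeasureTheory.integral_const_mul]
  -- I₂ = I by swapping
  have hI₂ : (∫ s, (∫ r, (if r ≤ s then g s * g r else 0) ∂μ) ∂μ)
      = ∫ s in Set.Ioc t T, g s * ∫ r in Set.Ioc s T, g r := by
    have hswap := integral_integral_swap (f := fun s r => if r ≤ s then g s * g r else 0)
      (μ := μ) (ν := μ) hf₂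
    rw [hswap, hμ]
    refine setIntegral_congr_fun measurableSet_Ioc (fun r hr => ?_)
    have h1 : (fun s => if r ≤ s then g s * g r else 0)
        = (Set.Ici r).indicator (fun s => g s * g r) := by
      funext s; simp [Set.indicator_apply, Set.mem_Ici]
    have h2 : Set.Ioc t T ∩ Set.Ici r = Set.Icc r T := by
      ext s
      simp only [Set.mem_inter_iff, Set.mem_Ioc, Set.mem_Ici, Set.mem_Icc]
      constructor
      · rintro ⟨⟨_, h2⟩, h3⟩; exact ⟨h3, h2⟩
      · rintro ⟨h1', h2⟩; exact ⟨⟨lt_of_lt_of_le hr.1 h1', h2⟩, h1'⟩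
    rw [h1, setIntegral_indicator measurableSet_Ici, h2, integral_Icc_eq_integral_Ioc,
      MeasureTheory.integral_mul_const, mul_comm]
  -- sum
  have hsum : (∫ s, (∫ r, (if s < r then g s * g r else 0) ∂μ) ∂μ)
      + (∫ s, (∫ r, (if r ≤ s then g s * g r else 0) ∂μ) ∂μ)
      = (∫ s, g s ∂μ) ^ 2 := by
    rw [← integral_add hf₁.integral_prod_left hf₂.integral_prod_left]
    have : ∀ᵐ s ∂μ, ((∫ r, (if s < r then g s * g r else 0) ∂μ)
        + ∫ r, (if r ≤ s then g s * g r else 0) ∂μ) = g s * ∫ r, g r ∂μ := by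
      filter_upwards [hf₁.prod_right_ae, hf₂.prod_right_ae] with s h1 h2
      rw [← integral_add h1 h2]
      have : ∀ r, ((if s < r then g s * g r else 0) + if r ≤ s then g s * g r else 0)
          = g s * g r := by
        intro r
        rcases lt_or_ge s r with hc | hc
        · rw [if_pos hc, if_neg (not_le.mpr hc), add_zero]
        · rw [if_neg (not_lt.mpr hc), if_pos hc, zero_add]
      simp_rw [this]
      exact MeasureTheory.integral_const_mul _ _
    rw [integral_congr_ae this, MeasureTheory.integral_mul_const, sq]
  rw [hI₁]
  nlinarith [hI₂, hsum]

set_option maxHeartbeats 2000000 in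
/-- Backward square-root Gronwall lemma (Lemma 20 of Maticiuc–Nie): if
`x(t)² ≤ 4C ∫_t^T x(s) g(s) ds` on `[0,T]` for a nonnegative continuous `x` and a
nonnegative integrable `g`, then `x(t) ≤ 2C ∫_t^T g(s) ds` on `[0,T]`. -/
theorem backward_sqrt_gronwall
    (T C : ℝ) (hT : 0 < T) (hC : 0 ≤ C)
    (x g : ℝ → ℝ)
    (hx : ContinuousOn x (Set.Icc 0 T))
    (hxnn : ∀ t ∈ Set.Icc (0 : ℝ) T, 0 ≤ x t)
    (hg : IntegrableOn g (Set.Icc 0 T))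
    (hgnn : ∀ t ∈ Set.Icc (0 : ℝ) T, 0 ≤ g t)
    (h : ∀ t ∈ Set.Icc (0 : ℝ) T, x t ^ 2 ≤ 4 * C * ∫ s in t..T, x s * g s) :
    ∀ t ∈ Set.Icc (0 : ℝ) T, x t ≤ 2 * C * ∫ s in t..T, g s := by
  have huIcc : Set.uIcc (0 : ℝ) T = Set.Icc 0 T := Set.uIcc_of_le hT.le
  set G : ℝ → ℝ := fun t => ∫ s in t..T, g s with hGdef
  -- basic facts
  have hgsub : ∀ t ∈ Set.Icc (0:ℝ) T, Set.Icc t T ⊆ Set.Icc 0 T := fun t ht =>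
    Set.Icc_subset_Icc ht.1 le_rfl
  have hgII : ∀ t ∈ Set.Icc (0:ℝ) T, IntervalIntegrable g volume t T := by
    intro t ht
    have : IntegrableOn g (Set.uIcc t T) := by
      rw [Set.uIcc_of_le ht.2]; exact hg.mono_set (hgsub t ht)
    exact this.intervalIntegrable
  have hGcont : ContinuousOn G (Set.Icc 0 T) := by
    have := intervalIntegral.continuousOn_primitive_interval_left
      (f := g) (μ := volume) (a := (0:ℝ)) (b := T) (by rw [huIcc]; exact hg)
    rwa [huIcc] at this
  have hGnn : ∀ t ∈ Set.Icc (0:ℝ) T, 0 ≤ G t := by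
    intro t ht
    exact intervalIntegral.integral_nonneg ht.2
      (fun s hs => hgnn s ⟨le_trans ht.1 hs.1, hs.2⟩)
  have hG0 : ∀ t ∈ Set.Icc (0:ℝ) T, G t ≤ G 0 := by
    intro t ht
    have hadd : (∫ s in (0:ℝ)..t, g s) + ∫ s in t..T, g s = ∫ s in (0:ℝ)..T, g s :=
      intervalIntegral.integral_add_adjacent_intervals
        (by have : IntegrableOn g (Set.uIcc 0 t) := by
              rw [Set.uIcc_of_le ht.1]; exact hg.mono_set (Set.Icc_subset_Icc le_rfl ht.2)
            exact this.intervalIntegrable)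
        (hgII t ht)
    have h0t : 0 ≤ ∫ s in (0:ℝ)..t, g s :=
      intervalIntegral.integral_nonneg ht.1 (fun s hs => hgnn s ⟨hs.1, le_trans hs.2 ht.2⟩)
    have : G 0 = (∫ s in (0:ℝ)..t, g s) + G t := hadd.symm
    linarith
  set K : ℝ := 4 * C * G 0 with hKdef
  have hG0nn : 0 ≤ G 0 := hGnn 0 (Set.left_mem_Icc.mpr hT.le)
  have hKnn : 0 ≤ K := by positivity
  -- max of x
  obtain ⟨m, hm, hmax⟩ := isCompact_Icc.exists_isMaxOn
    (Set.nonempty_Icc.mpr hT.le) hx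
  set M : ℝ := x m with hMdef
  have hMnn : 0 ≤ M := hxnn m hm
  -- interval integrability of x * g
  have hxgII : ∀ t ∈ Set.Icc (0:ℝ) T, IntervalIntegrable (fun s => x s * g s) volume t T := by
    intro t ht
    exact (hgII t ht).continuousOn_mul
      (hx.mono (by rw [Set.uIcc_of_le ht.2]; exact hgsub t ht))
  -- the key Fubini identity, interval form
  have hkey : ∀ t ∈ Set.Icc (0:ℝ) T, (∫ s in t..T, G s * g s) = G t ^ 2 / 2 := by
    intro t ht
    have hgt : IntegrableOn g (Set.Ioc t T) :=
      hg.mono_set (Set.Subset.trans Set.Ioc_subset_Icc_self (hgsub t ht))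
    have hfub := bsg_fubini t T g hgt
    have hGioc : ∀ s ∈ Set.Ioc t T, G s = ∫ r in Set.Ioc s T, g r := by
      intro s hs
      rw [hGdef]
      exact intervalIntegral.integral_of_le hs.2
    have h1 : (∫ s in t..T, G s * g s) = ∫ s in Set.Ioc t T, g s * ∫ r in Set.Ioc s T, g r := by
      rw [intervalIntegral.integral_of_le ht.2]
      refine setIntegral_congr_fun measurableSet_Ioc (fun s hs => ?_)
      rw [hGioc s hs, mul_comm]
    have h2 : G t = ∫ s in Set.Ioc t T, g s := intervalIntegral.integral_of_le ht.2
    rw [h1, h2]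
    linarith
  -- integral monotonicity: from an affine bound on x to a bound on ∫ x g
  have hbound : ∀ A, 0 ≤ A → (∀ s ∈ Set.Icc (0:ℝ) T, x s ≤ A + 2 * C * G s) →
      ∀ t ∈ Set.Icc (0:ℝ) T, x t ^ 2 ≤ 4 * C * A * G t + 4 * C ^ 2 * G t ^ 2 := by
    intro A hA hQ t ht
    have hGgII : IntervalIntegrable (fun s => (A + 2 * C * G s) * g s) volume t T := by
      have : ContinuousOn (fun s => A + 2 * C * G s) (Set.uIcc t T) := by
        refine continuousOn_const.add (continuousOn_const.mul (hGcont.mono ?_))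
        rw [Set.uIcc_of_le ht.2]; exact hgsub t ht
      exact (hgII t ht).continuousOn_mul this
    have hmono : (∫ s in t..T, x s * g s) ≤ ∫ s in t..T, (A + 2 * C * G s) * g s := by
      refine intervalIntegral.integral_mono_on ht.2 (hxgII t ht) hGgII (fun s hs => ?_)
      have hs' : s ∈ Set.Icc (0:ℝ) T := hgsub t ht hs
      exact mul_le_mul_of_nonneg_right (hQ s hs') (hgnn s hs')
    have hsplit : (∫ s in t..T, (A + 2 * C * G s) * g s)
        = A * G t + 2 * C * ∫ s in t..T, G s * g s := by
      have : (fun s => (A + 2 * C * G s) * g s)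
          = fun s => A * g s + 2 * C * (G s * g s) := by funext s; ring
      rw [this]
      have hGgII' : IntervalIntegrable (fun s => G s * g s) volume t T := by
        have : ContinuousOn G (Set.uIcc t T) := by
          refine hGcont.mono ?_
          rw [Set.uIcc_of_le ht.2]; exact hgsub t ht
        exact (hgII t ht).continuousOn_mul this
      rw [intervalIntegral.integral_add ((hgII t ht).const_mul A) (hGgII'.const_mul (2*C)),
        intervalIntegral.integral_const_mul, intervalIntegral.integral_const_mul]
    have := h t ht
    rw [hsplit, hkey t ht] at hmono
    have hC4 : (0:ℝ) ≤ 4 * C := by linarith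
    nlinarith [mul_le_mul_of_nonneg_left hmono hC4]
  -- Stage 1 : constant bounds improve
  have sqrt_step : ∀ u v : ℝ, 0 ≤ u → 0 ≤ v → u ^ 2 ≤ v ^ 2 → u ≤ v := by
    intro u v hu hv huv
    nlinarith
  have step_const : ∀ B, 0 ≤ B → (∀ s ∈ Set.Icc (0:ℝ) T, x s ≤ B) →
      ∀ t ∈ Set.Icc (0:ℝ) T, x t ≤ (B + K) / 2 := by
    intro B hB hQ t ht
    have h0 : x t ^ 2 ≤ 4 * C * B * G t := by
      have hmono : (∫ r in t..T, x r * g r) ≤ ∫ r in t..T, B * g r := by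
        refine intervalIntegral.integral_mono_on ht.2 (hxgII t ht)
          ((hgII t ht).const_mul B) (fun r hr => ?_)
        have hr' : r ∈ Set.Icc (0:ℝ) T := hgsub t ht hr
        exact mul_le_mul_of_nonneg_right (hQ r hr') (hgnn r hr')
      rw [intervalIntegral.integral_const_mul] at hmono
      have := h t ht
      have hC4 : (0:ℝ) ≤ 4 * C := by linarith
      nlinarith [mul_le_mul_of_nonneg_left hmono hC4]
    have hGle := hG0 t ht
    have hGt := hGnn t ht
    have h1 : x t ^ 2 ≤ B * K := by
      have h4 : 4 * C * B * G t ≤ 4 * C * B * G 0 :=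
        mul_le_mul_of_nonneg_left hGle (by positivity)
      have hBK : B * K = 4 * C * B * G 0 := by rw [hKdef]; ring
      linarith
    have hxt := hxnn t ht
    refine sqrt_step _ _ hxt (by linarith) ?_
    nlinarith [sq_nonneg (B - K)]
  -- Stage 1 iterated : x ≤ M / 2^n + K
  have claim1 : ∀ n : ℕ, ∀ s ∈ Set.Icc (0:ℝ) T, x s ≤ M / 2 ^ n + K := by
    intro n
    induction n with
    | zero => intro s hs; simpa using le_add_of_le_of_nonneg (hmax hs) hKnn
    | succ n ih =>
      intro s hs
      have hB : (0:ℝ) ≤ M / 2 ^ n + K :=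
        add_nonneg (div_nonneg hMnn (by positivity)) hKnn
      have h1 : x s ≤ (M / 2 ^ n + K + K) / 2 := step_const (M / 2 ^ n + K) hB ih s hs
      have heq : (M / 2 ^ n + K + K) / 2 = M / 2 ^ (n + 1) + K := by
        rw [pow_succ]; ring
      exact le_of_le_of_eq h1 heq
  -- from claim1 : x ≤ 2 K  (when K > 0), or x ≤ ε for all ε (when K = 0)
  rcases eq_or_lt_of_le hKnn with hK0 | hKpos
  · -- K = 0 : x t ≤ M / 2^n for every n, hence x t ≤ 0 ≤ RHS
    intro t ht
    have hxle : ∀ n : ℕ, x t ≤ M / 2 ^ n := by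
      intro n; have := claim1 n t ht; rw [← hK0] at this; linarith
    have hx0 : x t ≤ 0 := by
      by_contra hcon
      push_neg at hcon
      obtain ⟨n, hn⟩ := pow_unbounded_of_one_lt (M / x t) (by norm_num : (1:ℝ) < 2)
      have h2n : (0:ℝ) < 2 ^ n := by positivity
      have h2 := hxle n
      rw [le_div_iff₀ h2n] at h2
      rw [div_lt_iff₀ hcon] at hn
      nlinarith
    have h3 : 0 ≤ 2 * C * G t := mul_nonneg (by linarith) (hGnn t ht)
    linarith
  · -- K > 0
    have claim2 : ∀ s ∈ Set.Icc (0:ℝ) T, x s ≤ 2 * K := by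
      obtain ⟨n, hn⟩ := pow_unbounded_of_one_lt (M / K) (by norm_num : (1:ℝ) < 2)
      intro s hs
      have h2n : (0:ℝ) < 2 ^ n := by positivity
      rw [div_lt_iff₀ hKpos] at hn
      have hMn : M / 2 ^ n ≤ K := by rw [div_le_iff₀ h2n]; nlinarith
      have := claim1 n s hs
      linarith
    -- Stage 2 : affine bounds
    have step_aff : ∀ A A', 0 ≤ A' → A' ≤ A → K * (A - A') ≤ A' ^ 2 →
        (∀ s ∈ Set.Icc (0:ℝ) T, x s ≤ A + 2 * C * G s) →
        ∀ t ∈ Set.Icc (0:ℝ) T, x t ≤ A' + 2 * C * G t := by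
      intro A A' hA' hA'A hKA hQ t ht
      have hA : 0 ≤ A := le_trans hA' hA'A
      have h2 := hbound A hA hQ t ht
      have hGle := hG0 t ht
      have hGt := hGnn t ht
      have hxt := hxnn t ht
      have hrhs : 0 ≤ A' + 2 * C * G t :=
        add_nonneg hA' (mul_nonneg (by linarith) hGt)
      refine sqrt_step _ _ hxt hrhs ?_
      have hstep : 4 * C * G t * (A - A') ≤ K * (A - A') := by
        have hCG : C * G t ≤ C * G 0 := mul_le_mul_of_nonneg_left hGle hC
        have : K = 4 * C * G 0 := hKdef
        nlinarith
      nlinarith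
    -- Stage 2 iterated
    have claimN : ∀ n : ℕ, ∃ a : ℝ, 0 ≤ a ∧ a ≤ 8 * K / ((n:ℝ) + 4) ∧
        ∀ s ∈ Set.Icc (0:ℝ) T, x s ≤ a + 2 * C * G s := by
      intro n
      induction n with
      | zero =>
        refine ⟨2 * K, by linarith, by norm_num; linarith, fun s hs => ?_⟩
        have h3 : 0 ≤ 2 * C * G s := mul_nonneg (by linarith) (hGnn s hs)
        linarith [claim2 s hs]
      | succ n ih =>
        obtain ⟨a, ha0, ha1, hQ⟩ := ih
        have hn4 : (0:ℝ) < (n:ℝ) + 4 := by positivity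
        have hn5 : (0:ℝ) < (n:ℝ) + 5 := by positivity
        set b : ℝ := 8 * K / ((n:ℝ) + 4) with hbdef
        have hbK : b ≤ 2 * K := by
          rw [hbdef, div_le_iff₀ hn4]
          nlinarith [Nat.cast_nonneg (α := ℝ) n, hKpos.le]
        have ha2K : a ≤ 2 * K := le_trans ha1 hbK
        have hc : a ^ 2 / (8 * K) ≤ a / 4 := by
          rw [div_le_div_iff₀ (by positivity) (by norm_num)]
          nlinarith
        have hcnn : 0 ≤ a ^ 2 / (8 * K) := by positivity
        set a' : ℝ := a - a ^ 2 / (8 * K) with ha'def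
        have ha'0 : 0 ≤ a' := by rw [ha'def]; linarith
        have hmono : a' ≤ b - b ^ 2 / (8 * K) := by
          have key : b - b ^ 2 / (8 * K) - a'
              = (b - a) * (8 * K - a - b) / (8 * K) := by
            rw [ha'def]; field_simp; ring
          have hpos : 0 ≤ (b - a) * (8 * K - a - b) / (8 * K) := by
            apply div_nonneg _ (by positivity)
            apply mul_nonneg (by linarith) (by linarith)
          linarith
        have hfinal : b - b ^ 2 / (8 * K) ≤ 8 * K / ((n:ℝ) + 5) := by
          have e : b - b ^ 2 / (8 * K) = 8 * K * ((n:ℝ) + 3) / (((n:ℝ) + 4) ^ 2) := by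
            rw [hbdef]; field_simp; ring
          rw [e, div_le_div_iff₀ (by positivity) hn5]
          nlinarith [hKpos.le, Nat.cast_nonneg (α := ℝ) n]
        refine ⟨a', ha'0, ?_, ?_⟩
        · push_cast
          calc a' ≤ b - b ^ 2 / (8 * K) := hmono
            _ ≤ 8 * K / ((n:ℝ) + 5) := hfinal
            _ = 8 * K / ((n:ℝ) + 1 + 4) := by ring_nf
        · refine step_aff a a' ha'0 (by rw [ha'def]; linarith) ?_ hQ
          have hKc : K * (a - a') = a ^ 2 / 8 := by
            rw [ha'def]; field_simp; ring
          rw [hKc, ha'def]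
          nlinarith [hc, ha0]
    -- conclude
    intro t ht
    have hle : ∀ n : ℕ, x t ≤ 8 * K / ((n:ℝ) + 4) + 2 * C * G t := by
      intro n
      obtain ⟨a, _, ha1, hQ⟩ := claimN n
      linarith [hQ t ht]
    refine le_of_forall_pos_le_add fun ε hε => ?_
    obtain ⟨n, hn⟩ := exists_nat_ge (8 * K / ε)
    have hn4 : (0:ℝ) < (n:ℝ) + 4 := by positivity
    have hεn : 8 * K / ((n:ℝ) + 4) ≤ ε := by
      rw [div_le_iff₀ hn4]
      rw [div_le_iff₀ hε] at hn
      nlinarith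
    linarith [hle n]
end

section
/- Let H ∈ (1/2,1), n ∈ ℕ, and t₁, …, tₙ ≥ 0. Then the n×n real symmetric matrix R with entries R_{ij} = (1/2)(tᵢ^{2H} + tⱼ^{2H} − |tᵢ − tⱼ|^{2H}) is positive semidefinite, i.e., Σ_{i,j} λᵢ λⱼ R_{ij} ≥ 0 for all λ ∈ ℝⁿ. -/
open MeasureTheory Set

/-- `1 - cos y ≤ y^2/2`. -/
lemma fbm_one_sub_cos_le (y : ℝ) : 1 - Real.cos y ≤ y ^ 2 / 2 := by
  have h1 := Real.cos_sq (y / 2)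
  have h2 : Real.sin (y / 2) ^ 2 ≤ (y / 2) ^ 2 := Real.sin_sq_le_sq
  have h3 := Real.sin_sq_add_cos_sq (y / 2)
  have h4 : 2 * (y / 2) = y := by ring
  rw [h4] at h1
  nlinarith

lemma fbm_integrableOn {α : ℝ} (hα1 : 0 < α) (hα2 : α < 2) (a : ℝ) :
    IntegrableOn (fun x => (1 - Real.cos (a * x)) * x ^ (-(1 + α))) (Ioi (0 : ℝ)) := by
  have hmeas : ∀ s : Set ℝ, MeasurableSet s → s ⊆ Ioi 0 → AEStronglyMeasurable
      (fun x : ℝ => (1 - Real.cos (a * x)) * x ^ (-(1 + α))) (volume.restrict s) := by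
    intro s hs hss
    apply ContinuousOn.aestronglyMeasurable _ hs
    intro x hx
    have hx0 : x ≠ 0 := ne_of_gt (hss hx)
    exact ((continuous_const.sub (Real.continuous_cos.comp
        (continuous_const.mul continuous_id))).continuousAt.continuousWithinAt.mul
      (Real.continuousAt_rpow_const x _ (Or.inl hx0)).continuousWithinAt)
  rw [← Ioc_union_Ioi_eq_Ioi (zero_le_one (α := ℝ))]
  apply IntegrableOn.union
  · -- on (0,1]
    have hg : IntegrableOn (fun x : ℝ => a ^ 2 / 2 * x ^ (1 - α)) (Ioc (0:ℝ) 1) := by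
      exact Integrable.const_mul ((integrableOn_Ioc_iff_integrableOn_Ioo (f := fun x : ℝ => x ^ (1 - α)) (b := (1:ℝ))
          (hb := enorm_ne_top)).mpr
        ((intervalIntegral.integrableOn_Ioo_rpow_iff one_pos).2 (by linarith))) _
    apply Integrable.mono' hg (hmeas _ measurableSet_Ioc (fun y hy => hy.1))
    rw [ae_restrict_iff' measurableSet_Ioc]
    refine ae_of_all _ fun x hx => ?_
    have hx0 : 0 < x := hx.1
    have hp : (0:ℝ) ≤ x ^ (-(1 + α)) := Real.rpow_nonneg hx0.le _
    have hcos : 0 ≤ 1 - Real.cos (a * x) := by nlinarith [Real.cos_le_one (a * x)]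
    rw [Real.norm_eq_abs, abs_mul, abs_of_nonneg hcos, abs_of_nonneg hp]
    have hsplit : x ^ (1 - α) = x ^ (2:ℕ) * x ^ (-(1 + α)) := by
      rw [← Real.rpow_natCast x 2, ← Real.rpow_add hx0]
      congr 1
      push_cast
      ring
    rw [hsplit]
    have hb := fbm_one_sub_cos_le (a * x)
    nlinarith [mul_le_mul_of_nonneg_right hb hp]
  · -- on (1,∞)
    have hg : IntegrableOn (fun x : ℝ => 2 * x ^ (-(1 + α))) (Ioi (1:ℝ)) :=
      (integrableOn_Ioi_rpow_of_lt (by linarith) one_pos).const_mul 2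
    apply Integrable.mono' hg (hmeas _ measurableSet_Ioi (fun y hy => mem_Ioi.2 (lt_trans one_pos (mem_Ioi.1 hy))))
    rw [ae_restrict_iff' measurableSet_Ioi]
    refine ae_of_all _ fun x hx => ?_
    have hx0 : (0:ℝ) < x := lt_trans one_pos hx
    have hp : (0:ℝ) ≤ x ^ (-(1 + α)) := Real.rpow_nonneg hx0.le _
    have hcos : 0 ≤ 1 - Real.cos (a * x) := by nlinarith [Real.cos_le_one (a * x)]
    rw [Real.norm_eq_abs, abs_mul, abs_of_nonneg hcos, abs_of_nonneg hp]
    have h2 : 1 - Real.cos (a * x) ≤ 2 := by nlinarith [Real.neg_one_le_cos (a * x)]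
    exact mul_le_mul_of_nonneg_right h2 hp

lemma fbm_scaling {α : ℝ} (hα1 : 0 < α) (a : ℝ) :
    ∫ x in Ioi (0:ℝ), (1 - Real.cos (a * x)) * x ^ (-(1 + α))
      = |a| ^ α * ∫ x in Ioi (0:ℝ), (1 - Real.cos x) * x ^ (-(1 + α)) := by
  have habs : ∀ x : ℝ, Real.cos (a * x) = Real.cos (|a| * x) := by
    intro x
    rcases abs_choice a with h | h
    · rw [h]
    · rw [h, neg_mul, Real.cos_neg]
  rcases eq_or_lt_of_le (abs_nonneg a) with h0 | hpos
  · have ha : a = 0 := abs_eq_zero.mp h0.symm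
    simp [ha, Real.zero_rpow (ne_of_gt hα1)]
  · set b := |a| with hb
    have hbinv : b ^ (1 + α) * b ^ (-(1 + α)) = 1 := by
      rw [← Real.rpow_add hpos, show (1 + α + -(1 + α) : ℝ) = 0 from by ring, Real.rpow_zero]
    have hcongr : ∫ x in Ioi (0:ℝ), (1 - Real.cos (a * x)) * x ^ (-(1 + α))
        = ∫ x in Ioi (0:ℝ), b ^ (1 + α) * ((1 - Real.cos (b * x)) * (b * x) ^ (-(1 + α))) := by
      refine setIntegral_congr_fun measurableSet_Ioi fun x hx => ?_
      have hx0 : (0:ℝ) < x := hx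
      rw [habs x, Real.mul_rpow hpos.le hx0.le,
        show b ^ (1 + α) * ((1 - Real.cos (b * x)) * (b ^ (-(1 + α)) * x ^ (-(1 + α))))
          = (b ^ (1 + α) * b ^ (-(1 + α))) * ((1 - Real.cos (b * x)) * x ^ (-(1 + α))) from by
            ring, hbinv, one_mul]
    rw [hcongr, integral_const_mul]
    have hcomp := integral_comp_mul_left_Ioi
      (fun u : ℝ => (1 - Real.cos u) * u ^ (-(1 + α))) 0 hpos
    rw [mul_zero] at hcomp
    rw [hcomp, smul_eq_mul]
    have hpow : b ^ (1 + α) * b⁻¹ = b ^ α := by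
      rw [← Real.rpow_neg_one b, ← Real.rpow_add hpos]
      congr 1
      ring
    rw [← hpow]; ring

lemma fbm_I_pos {α : ℝ} (hα1 : 0 < α) (hα2 : α < 2) :
    0 < ∫ x in Ioi (0:ℝ), (1 - Real.cos x) * x ^ (-(1 + α)) := by
  have hint : IntegrableOn (fun x : ℝ => (1 - Real.cos x) * x ^ (-(1 + α))) (Ioi 0) := by
    have := fbm_integrableOn hα1 hα2 1
    simpa using this
  have hnn : 0 ≤ᵐ[volume.restrict (Ioi (0:ℝ))]
      fun x : ℝ => (1 - Real.cos x) * x ^ (-(1 + α)) := by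
    refine (ae_restrict_iff' measurableSet_Ioi).mpr (ae_of_all _ fun x hx => ?_)
    have hx0 : (0:ℝ) < x := hx
    exact mul_nonneg (by nlinarith [Real.cos_le_one x]) (Real.rpow_nonneg hx0.le _)
  rw [setIntegral_pos_iff_support_of_nonneg_ae hnn hint]
  have hsub : Ioo (0:ℝ) 1 ⊆
      (Function.support fun x : ℝ => (1 - Real.cos x) * x ^ (-(1 + α))) ∩ Ioi 0 := by
    intro x hx
    refine ⟨?_, hx.1⟩
    have hs : 0 < Real.sin (x / 2) :=
      Real.sin_pos_of_pos_of_lt_pi (by linarith [hx.1]) (by linarith [Real.pi_gt_three, hx.2])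
    have hcos : Real.cos x < 1 := by
      have h1 := Real.cos_sq (x / 2)
      have h3 := Real.sin_sq_add_cos_sq (x / 2)
      rw [show 2 * (x / 2) = x by ring] at h1
      nlinarith [mul_pos hs hs]
    have hxp : 0 < x ^ (-(1 + α)) := Real.rpow_pos_of_pos hx.1 _
    exact ne_of_gt (mul_pos (by linarith) hxp)
  calc (0:ENNReal) < volume (Ioo (0:ℝ) 1) := by simp [Real.volume_Ioo]
    _ ≤ _ := measure_mono hsub

/-- Positive semidefiniteness of the fractional Brownian motion covariance:
for `H ∈ (1/2,1)` and `t₁,…,tₙ ≥ 0`, the matrix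
`R_{ij} = (1/2)(tᵢ^{2H} + tⱼ^{2H} − |tᵢ − tⱼ|^{2H})` is positive semidefinite. -/
theorem fbm_covariance_posSemidef
    (H : ℝ) (hH : 1 / 2 < H) (hH1 : H < 1)
    (n : ℕ) (t : Fin n → ℝ) (ht : ∀ i, 0 ≤ t i) (l : Fin n → ℝ) :
    0 ≤ ∑ i, ∑ j,
      l i * l j *
        ((1 / 2) * (t i ^ (2 * H) + t j ^ (2 * H) - |t i - t j| ^ (2 * H))) := by
  set α : ℝ := 2 * H with hα
  have hα1 : 0 < α := by simp only [hα]; linarith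
  have hα2 : α < 2 := by simp only [hα]; linarith
  set I : ℝ := ∫ x in Ioi (0:ℝ), (1 - Real.cos x) * x ^ (-(1 + α)) with hI
  have hIpos : 0 < I := fbm_I_pos hα1 hα2
  set f : ℝ → ℝ → ℝ := fun a x => (1 - Real.cos (a * x)) * x ^ (-(1 + α)) with hf
  have hint : ∀ a, IntegrableOn (f a) (Ioi (0:ℝ)) := fun a => fbm_integrableOn hα1 hα2 a
  have hF : ∀ a : ℝ, ∫ x in Ioi (0:ℝ), f a x = |a| ^ α * I := fun a => fbm_scaling hα1 a
  set h : Fin n → Fin n → ℝ → ℝ := fun i j x =>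
    l i * l j * ((1 / 2) * (f (t i) x + f (t j) x - f (t i - t j) x)) with hh
  have hij_int : ∀ i j, Integrable (h i j) (volume.restrict (Ioi (0:ℝ))) := by
    intro i j
    exact ((((hint (t i)).add (hint (t j))).sub (hint (t i - t j))).const_mul
      (1 / 2)).const_mul (l i * l j)
  -- the target sum times I equals an integral of a nonnegative function
  have key : (∑ i, ∑ j, l i * l j *
        ((1 / 2) * (t i ^ (2 * H) + t j ^ (2 * H) - |t i - t j| ^ (2 * H)))) * I
      = ∫ x in Ioi (0:ℝ), ∑ i, ∑ j, h i j x := by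
    rw [integral_finset_sum _ (fun i _ => integrable_finset_sum _ (fun j _ => hij_int i j))]
    rw [Finset.sum_mul]
    refine Finset.sum_congr rfl fun i _ => ?_
    rw [integral_finset_sum _ (fun j _ => hij_int i j), Finset.sum_mul]
    refine Finset.sum_congr rfl fun j _ => ?_
    have : ∫ x in Ioi (0:ℝ), h i j x
        = l i * l j * ((1 / 2) * ((∫ x in Ioi (0:ℝ), f (t i) x)
            + (∫ x in Ioi (0:ℝ), f (t j) x) - ∫ x in Ioi (0:ℝ), f (t i - t j) x)) := by
      have hadd : Integrable (fun x => f (t i) x + f (t j) x)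
          (volume.restrict (Ioi (0:ℝ))) := (hint (t i)).add (hint (t j))
      simp only [hh]
      rw [integral_const_mul, integral_const_mul,
        integral_sub hadd (hint (t i - t j)),
        integral_add (hint (t i)) (hint (t j))]
    rw [this, hF, hF, hF, abs_of_nonneg (ht i), abs_of_nonneg (ht j)]
    ring
  have hnonneg : 0 ≤ ∫ x in Ioi (0:ℝ), ∑ i, ∑ j, h i j x := by
    apply setIntegral_nonneg measurableSet_Ioi
    intro x hx
    have hx0 : (0:ℝ) < x := hx
    have hxp : (0:ℝ) ≤ x ^ (-(1 + α)) := Real.rpow_nonneg hx0.le _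
    have hsum : ∑ i, ∑ j, h i j x
        = (1 / 2) * x ^ (-(1 + α)) *
          ((∑ i, l i * (1 - Real.cos (t i * x))) * (∑ j, l j * (1 - Real.cos (t j * x)))
            + (∑ i, l i * Real.sin (t i * x)) * (∑ j, l j * Real.sin (t j * x))) := by
      rw [Finset.sum_mul_sum, Finset.sum_mul_sum, ← Finset.sum_add_distrib,
        Finset.mul_sum]
      refine Finset.sum_congr rfl fun i _ => ?_
      rw [← Finset.sum_add_distrib, Finset.mul_sum]
      refine Finset.sum_congr rfl fun j _ => ?_
      simp only [hh, hf]
      rw [show (t i - t j) * x = t i * x - t j * x from by ring, Real.cos_sub]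
      ring
    rw [hsum]
    have h1 : 0 ≤ (∑ i, l i * (1 - Real.cos (t i * x))) *
        (∑ j, l j * (1 - Real.cos (t j * x))) := mul_self_nonneg _
    have h2 : 0 ≤ (∑ i, l i * Real.sin (t i * x)) *
        (∑ j, l j * Real.sin (t j * x)) := mul_self_nonneg _
    have : (0:ℝ) ≤ (1 / 2) * x ^ (-(1 + α)) := by positivity
    nlinarith
  rw [← key] at hnonneg
  by_contra hneg
  push_neg at hneg
  nlinarith
end
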